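/- arXiv:1711.04261 — 2 statements merged into one kernel-verified Lean document; each statement's English description precedes it below -/
import Mathlib

section
/- Let 𝕜 be a commutative unital ring and let R be a unital 𝕜-algebra with an idempotent e satisfying e ≠ 0 and e ≠ 1; put f = 1 − e, A = eRe, B = fRf, M = eRf, N = fRe. A sequence τ = {τ_k}_{k∈ℕ} of 𝕜-linear maps on R satisfies τ_k(R) ⊆ Z(R) and τ_k([x,y]) = 0 for all x, y ∈ R and all k ∈ ℕ, if and only if for every k ∈ ℕ the following hold: τ_k(M) = {0} and τ_k(N) = {0}; τ_k(A) ⊆ Z(R) and τ_k(B) ⊆ Z(R); τ_k([a,a']) = 0 for all a, a' ∈ A and τ_k([b,b']) = 0 for all b, b' ∈ B; and τ_k(mn) = τ_k(nm) for all m ∈ M, n ∈ N. -/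
open Finset

section Defs

variable (𝕜 R : Type*) [CommRing 𝕜] [Ring R] [Algebra 𝕜 R]

/-- A higher derivation on a unital `𝕜`-algebra `R`: a sequence `D` of `𝕜`-linear maps
with `D 0 = id` and `D k (x*y) = ∑_{i+j=k} D i x * D j y`. -/
def IsHigherDerivation (D : ℕ → R →ₗ[𝕜] R) : Prop :=
  D 0 = LinearMap.id ∧
    ∀ (k : ℕ) (x y : R),
      D k (x * y) = ∑ ij ∈ Finset.HasAntidiagonal.antidiagonal k, D ij.1 x * D ij.2 y

/-- A Lie higher derivation on a unital `𝕜`-algebra `R`: a sequence `L` of `𝕜`-linear maps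
with `L 0 = id` and `L k [x,y] = ∑_{i+j=k} [L i x, L j y]`. -/
def IsLieHigherDerivation (L : ℕ → R →ₗ[𝕜] R) : Prop :=
  L 0 = LinearMap.id ∧
    ∀ (k : ℕ) (x y : R),
      L k (x * y - y * x) =
        ∑ ij ∈ Finset.HasAntidiagonal.antidiagonal k,
          (L ij.1 x * L ij.2 y - L ij.2 y * L ij.1 x)

/-- A Lie higher derivation `L` is proper if `L k = D k + τ k` (k ≥ 1) for some higher
derivation `D` and central-valued linear maps `τ k` vanishing on all commutators. -/
def IsProperLHD (L : ℕ → R →ₗ[𝕜] R) : Prop :=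
  ∃ D τ : ℕ → R →ₗ[𝕜] R,
    IsHigherDerivation 𝕜 R D ∧
      (∀ k, 1 ≤ k → ∀ x : R, τ k x ∈ Set.center R) ∧
      (∀ k, 1 ≤ k → ∀ x y : R, τ k (x * y - y * x) = 0) ∧
      (∀ k, 1 ≤ k → L k = D k + τ k)

/-- `R` has the LHD property: every Lie higher derivation on `R` is proper. -/
def HasLHDProperty : Prop :=
  ∀ L : ℕ → R →ₗ[𝕜] R, IsLieHigherDerivation 𝕜 R L → IsProperLHD 𝕜 R L

end Defs

section Peirce

variable {R : Type*} [Ring R]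

/-- The Peirce corner `eRf` of a ring `R`. -/
def corner (e f : R) : Set R := Set.range fun r => e * r * f

/-- The center of the corner algebra `eRe`:
elements of `eRe` commuting with every element of `eRe`. -/
def cornerCenter (e : R) : Set R :=
  {x ∈ corner e e | ∀ y ∈ corner e e, x * y = y * x}

/-- Weak faithfulness of the generalized matrix algebra determined by the idempotent `e`
(with `A = eRe`, `B = fRf`, `M = eRf`, `N = fRe`, `f = 1 - e`):
`aM = 0 = Na → a = 0` and `Mb = 0 = bN → b = 0`. -/
def WeaklyFaithful (e : R) : Prop :=
  (∀ a ∈ corner e e,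
      (∀ m ∈ corner e (1 - e), a * m = 0) →
        (∀ n ∈ corner (1 - e) e, n * a = 0) → a = 0) ∧
    ∀ b ∈ corner (1 - e) (1 - e),
      (∀ m ∈ corner e (1 - e), m * b = 0) →
        (∀ n ∈ corner (1 - e) e, b * n = 0) → b = 0

/-- The corner algebra `eRe` contains no nonzero central ideal: every two-sided ideal of
`eRe` contained in its center is zero. -/
def NoNonzeroCentralIdeal (e : R) : Prop :=
  ∀ I : Set R, I ⊆ cornerCenter e → (0 : R) ∈ I →
    (∀ x ∈ I, ∀ y ∈ I, x + y ∈ I) → (∀ x ∈ I, -x ∈ I) →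
    (∀ a ∈ corner e e, ∀ x ∈ I, a * x ∈ I ∧ x * a ∈ I) →
    ∀ x ∈ I, x = 0

/-- The corner algebra `eRe` is a domain. -/
def CornerDomain (e : R) : Prop :=
  ∀ x ∈ corner e e, ∀ y ∈ corner e e, x * y = 0 → x = 0 ∨ y = 0

/-- The `(eRe, fRf)`-bimodule `eRf` is strongly faithful: either it is faithful as a right
`fRf`-module and `am = 0 → a = 0 ∨ m = 0`, or it is faithful as a left `eRe`-module and
`mb = 0 → m = 0 ∨ b = 0`. -/
def StronglyFaithful (e f : R) : Prop :=
  ((∀ b ∈ corner f f, (∀ m ∈ corner e f, m * b = 0) → b = 0) ∧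
      ∀ a ∈ corner e e, ∀ m ∈ corner e f, a * m = 0 → a = 0 ∨ m = 0) ∨
    ((∀ a ∈ corner e e, (∀ m ∈ corner e f, a * m = 0) → a = 0) ∧
      ∀ m ∈ corner e f, ∀ b ∈ corner f f, m * b = 0 → m = 0 ∨ b = 0)

end Peirce


private lemma corner_mul_key {R : Type*} [Ring R] (p q : R) (hp : p * p = p) (hq : q * q = q)
    (hpq : p + q = 1) (u v : R) :
    (p * u * p) * (p * v * p) + (p * u * q) * (q * v * p) = p * (u * v) * p := by
  have hp' : ∀ t : R, p * (p * t) = p * t := fun t => by rw [← mul_assoc, hp]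
  have hq' : ∀ t : R, q * (q * t) = q * t := fun t => by rw [← mul_assoc, hq]
  simp only [mul_assoc, hp', hq']
  rw [← mul_add, ← mul_add, ← add_mul, hpq, one_mul]

private lemma peirce_decomp {R : Type*} [Ring R] (e z : R) :
    z = e * z * e + e * z * (1 - e) + (1 - e) * z * e + (1 - e) * z * (1 - e) := by
  noncomm_ring

/-- Proposition `center`, Peirce form. A sequence `τ` of `𝕜`-linear maps
on `R` (indexed by `k ≥ 1`) is central-valued and vanishes on commutators iff for every
`k ≥ 1`: `τ k` kills `eRf` and `fRe`, maps `eRe` and `fRf` into `Z(R)`, kills commutators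
of `eRe` and of `fRf`, and satisfies `τ k (mn) = τ k (nm)` for `m ∈ eRf`, `n ∈ fRe`. -/
theorem center_valued_characterization {𝕜 R : Type*} [CommRing 𝕜] [Ring R] [Algebra 𝕜 R]
    (e : R) (he : e * e = e) (he0 : e ≠ 0) (he1 : e ≠ 1)
    (τ : ℕ → R →ₗ[𝕜] R) :
    (∀ k, 1 ≤ k →
        (∀ x : R, τ k x ∈ Set.center R) ∧ (∀ x y : R, τ k (x * y - y * x) = 0)) ↔
      (∀ k, 1 ≤ k →
        (∀ m ∈ corner e (1 - e), τ k m = 0) ∧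
        (∀ n ∈ corner (1 - e) e, τ k n = 0) ∧
        (∀ a ∈ corner e e, τ k a ∈ Set.center R) ∧
        (∀ b ∈ corner (1 - e) (1 - e), τ k b ∈ Set.center R) ∧
        (∀ a ∈ corner e e, ∀ a' ∈ corner e e, τ k (a * a' - a' * a) = 0) ∧
        (∀ b ∈ corner (1 - e) (1 - e), ∀ b' ∈ corner (1 - e) (1 - e),
          τ k (b * b' - b' * b) = 0) ∧
        (∀ m ∈ corner e (1 - e), ∀ n ∈ corner (1 - e) e, τ k (m * n) = τ k (n * m))) := by
  have hf : (1 - e) * (1 - e) = 1 - e := by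
    have : e * (1 - e) = 0 := by rw [mul_sub, mul_one, he, sub_self]
    rw [sub_mul, one_mul, this, sub_zero]
  have hef : e + (1 - e) = 1 := by abel
  have hfe : (1 - e) + e = 1 := by abel
  constructor
  · intro h k hk
    obtain ⟨hc, hcomm⟩ := h k hk
    have hEM : ∀ r : R, e * (e * r * (1 - e)) - (e * r * (1 - e)) * e = e * r * (1 - e) := by
      intro r
      have h1 : e * (e * r * (1 - e)) = e * r * (1 - e) := by
        rw [← mul_assoc, ← mul_assoc, he]
      have h2 : (e * r * (1 - e)) * e = 0 := by
        have : (1 - e) * e = 0 := by rw [sub_mul, one_mul, he, sub_self]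
        rw [mul_assoc, this, mul_zero]
      rw [h1, h2, sub_zero]
    have hEN : ∀ r : R, ((1 - e) * r * e) * e - e * ((1 - e) * r * e) = (1 - e) * r * e := by
      intro r
      have h1 : ((1 - e) * r * e) * e = (1 - e) * r * e := by rw [mul_assoc, he]
      have h2 : e * ((1 - e) * r * e) = 0 := by
        have : e * (1 - e) = 0 := by rw [mul_sub, mul_one, he, sub_self]
        rw [← mul_assoc, ← mul_assoc, this, zero_mul, zero_mul]
      rw [h1, h2, sub_zero]
    refine ⟨?_, ?_, fun a _ => hc a, fun b _ => hc b,
      fun a _ a' _ => hcomm a a', fun b _ b' _ => hcomm b b', ?_⟩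
    · rintro m ⟨r, rfl⟩
      have := hcomm e (e * r * (1 - e))
      rwa [hEM r] at this
    · rintro n ⟨r, rfl⟩
      have := hcomm ((1 - e) * r * e) e
      rwa [hEN r] at this
    · intro m _ n _
      have := hcomm m n
      rw [map_sub, sub_eq_zero] at this
      exact this
  · intro h
    intro k hk
    obtain ⟨hM, hN, hA, hB, hAA, hBB, hMN⟩ := h k hk
    have keyE := corner_mul_key e (1 - e) he hf hef
    have keyF := corner_mul_key (1 - e) e hf he hfe
    have hsplit : ∀ z : R, τ k z = τ k (e * z * e) + τ k ((1 - e) * z * (1 - e)) := by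
      intro z
      conv_lhs => rw [peirce_decomp e z]
      rw [map_add, map_add, map_add, hM _ ⟨z, rfl⟩, hN _ ⟨z, rfl⟩]
      abel
    constructor
    · intro x
      rw [hsplit x]
      exact Set.add_mem_center (hA _ ⟨x, rfl⟩) (hB _ ⟨x, rfl⟩)
    · intro x y
      rw [hsplit (x * y - y * x)]
      have h1 : e * (x * y - y * x) * e =
          ((e * x * e) * (e * y * e) + (e * x * (1 - e)) * ((1 - e) * y * e)) -
            ((e * y * e) * (e * x * e) + (e * y * (1 - e)) * ((1 - e) * x * e)) := by
        have hexp : e * (x * y - y * x) * e = e * (x * y) * e - e * (y * x) * e := by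
          noncomm_ring
        rw [hexp, ← keyE x y, ← keyE y x]
      have h2 : (1 - e) * (x * y - y * x) * (1 - e) =
          (((1 - e) * x * (1 - e)) * ((1 - e) * y * (1 - e)) +
              ((1 - e) * x * e) * (e * y * (1 - e))) -
            (((1 - e) * y * (1 - e)) * ((1 - e) * x * (1 - e)) +
              ((1 - e) * y * e) * (e * x * (1 - e))) := by
        have hexp : (1 - e) * (x * y - y * x) * (1 - e) =
            (1 - e) * (x * y) * (1 - e) - (1 - e) * (y * x) * (1 - e) := by
          noncomm_ring
        rw [hexp, ← keyF x y, ← keyF y x]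
      rw [h1, h2, map_sub, map_add, map_add, map_sub, map_add, map_add]
      have hc1 := hAA (e * x * e) ⟨x, rfl⟩ (e * y * e) ⟨y, rfl⟩
      have hc2 := hBB ((1 - e) * x * (1 - e)) ⟨x, rfl⟩ ((1 - e) * y * (1 - e)) ⟨y, rfl⟩
      rw [map_sub, sub_eq_zero] at hc1 hc2
      rw [hc1, hc2]
      have g1 := hMN (e * x * (1 - e)) ⟨x, rfl⟩ ((1 - e) * y * e) ⟨y, rfl⟩
      have g2 := hMN (e * y * (1 - e)) ⟨y, rfl⟩ ((1 - e) * x * e) ⟨x, rfl⟩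
      rw [g1, g2]
      abel
end

section
/- Let 𝕜 be a commutative unital ring and let R be a 2-torsion free unital 𝕜-algebra with an idempotent e satisfying e ≠ 0 and e ≠ 1; put f = 1 − e, A = eRe, B = fRf, M = eRf, N = fRe. Assume R is trivial in the sense that MN = {0} and NM = {0}, that R is weakly faithful, and that Z(A) = Z(R)e and Z(B) = Z(R)f. Then R has the LHD property, i.e., every Lie higher derivation on R is proper. -/
open Finset

namespace LHDzz

variable {𝕜 R : Type*} [CommRing 𝕜] [Ring R] [Algebra 𝕜 R]

/-- Associativity of convolution, via power series. -/
lemma conv_assoc (F G H : ℕ → R) (n : ℕ) :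
    ∑ ij ∈ antidiagonal n, F ij.1 * ∑ pq ∈ antidiagonal ij.2, G pq.1 * H pq.2 =
    ∑ ij ∈ antidiagonal n, (∑ pq ∈ antidiagonal ij.1, F pq.1 * G pq.2) * H ij.2 := by
  have h := congrArg (PowerSeries.coeff (R := R) n)
    (mul_assoc (PowerSeries.mk F) (PowerSeries.mk G) (PowerSeries.mk H))
  simp only [PowerSeries.coeff_mul, PowerSeries.coeff_mk] at h
  simpa using h.symm

lemma sum_ad_boundary {M : Type*} [AddCommMonoid M] {n : ℕ} (hn : 1 ≤ n) (g : ℕ × ℕ → M)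
    (hmid : ∀ i j, i + j = n → 0 < i → 0 < j → g (i, j) = 0) :
    ∑ ij ∈ antidiagonal n, g ij = g (0, n) + g (n, 0) := by
  rw [Finset.Nat.sum_antidiagonal_eq_sum_range_succ_mk, Finset.sum_range_succ]
  have h0 : ∑ k ∈ range n, g (k, n - k) = g (0, n) := by
    rw [Finset.sum_eq_single_of_mem 0 (mem_range.2 hn)]
    · norm_num
    · intro b hb hb0
      have hb' := mem_range.1 hb
      exact hmid b (n - b) (by omega) (by omega) (by omega)
  rw [h0, Nat.sub_self]

lemma sum_ad_single_right {M : Type*} [AddCommMonoid M] {n : ℕ} (g : ℕ × ℕ → M)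
    (hmid : ∀ i j, i + j = n → 0 < i → g (i, j) = 0) :
    ∑ ij ∈ antidiagonal n, g ij = g (0, n) := by
  rw [Finset.Nat.sum_antidiagonal_eq_sum_range_succ_mk]
  rw [Finset.sum_eq_single_of_mem 0 (mem_range.2 (by omega))]
  · norm_num
  · intro b hb hb0
    have hb' := mem_range.1 hb
    exact hmid b (n - b) (by omega) (by omega)

lemma sum_ad_single_left {M : Type*} [AddCommMonoid M] {n : ℕ} (g : ℕ × ℕ → M)
    (hmid : ∀ i j, i + j = n → 0 < j → g (i, j) = 0) :
    ∑ ij ∈ antidiagonal n, g ij = g (n, 0) := by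
  rw [Finset.Nat.sum_antidiagonal_eq_sum_range_succ_mk]
  rw [Finset.sum_eq_single_of_mem n (mem_range.2 (by omega))]
  · norm_num
  · intro b hb hb0
    have hb' := mem_range.1 hb
    exact hmid b (n - b) (by omega) (by omega)

/-- All the data and hypotheses, in a symmetric form that can be "swapped". -/
structure Setup (𝕜 R : Type*) [CommRing 𝕜] [Ring R] [Algebra 𝕜 R] where
  L : ℕ → R →ₗ[𝕜] R
  e : R
  f : R
  hL0 : L 0 = LinearMap.id
  hLie : ∀ (k : ℕ) (x y : R), L k (x*y - y*x) =
    ∑ ij ∈ antidiagonal k, (L ij.1 x * L ij.2 y - L ij.2 y * L ij.1 x)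
  htf : ∀ x : R, x + x = 0 → x = 0
  hee : e * e = e
  hff : f * f = f
  hef : e * f = 0
  hfe : f * e = 0
  hef1 : e + f = 1
  hMN : ∀ x y : R, (e*x*f) * (f*y*e) = 0
  hNM : ∀ x y : R, (f*x*e) * (e*y*f) = 0
  hwfA : ∀ a : R, e*a*e = a → (∀ m : R, a*(e*m*f) = 0) → (∀ m : R, (f*m*e)*a = 0) → a = 0
  hwfB : ∀ b : R, f*b*f = b → (∀ m : R, b*(f*m*e) = 0) → (∀ m : R, (e*m*f)*b = 0) → b = 0
  hZA : ∀ a : R, e*a*e = a → (∀ y : R, a*(e*y*e) = (e*y*e)*a) → ∃ z ∈ Set.center R, z * e = a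
  hZB : ∀ b : R, f*b*f = b → (∀ y : R, b*(f*y*f) = (f*y*f)*b) → ∃ z ∈ Set.center R, z * f = b

namespace Setup

variable (S : Setup 𝕜 R)

def swap : Setup 𝕜 R where
  L := S.L
  e := S.f
  f := S.e
  hL0 := S.hL0
  hLie := S.hLie
  htf := S.htf
  hee := S.hff
  hff := S.hee
  hef := S.hfe
  hfe := S.hef
  hef1 := by rw [add_comm]; exact S.hef1
  hMN := S.hNM
  hNM := S.hMN
  hwfA := S.hwfB
  hwfB := S.hwfA
  hZA := S.hZB
  hZB := S.hZA

@[simp] lemma swap_L : S.swap.L = S.L := rfl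
@[simp] lemma swap_e : S.swap.e = S.f := rfl
@[simp] lemma swap_f : S.swap.f = S.e := rfl
@[simp] lemma swap_swap : S.swap.swap = S := rfl

/-- Peirce projections. -/
def pA (x : R) : R := S.e * x * S.e
def pM (x : R) : R := S.e * x * S.f
def pN (x : R) : R := S.f * x * S.e
def pB (x : R) : R := S.f * x * S.f

@[simp] lemma swap_pA : S.swap.pA = S.pB := rfl
@[simp] lemma swap_pB : S.swap.pB = S.pA := rfl
@[simp] lemma swap_pM : S.swap.pM = S.pN := rfl
@[simp] lemma swap_pN : S.swap.pN = S.pM := rfl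


lemma ee' : ∀ z : R, S.e * (S.e * z) = S.e * z := fun z => by rw [← mul_assoc, S.hee]
lemma ff' : ∀ z : R, S.f * (S.f * z) = S.f * z := fun z => by rw [← mul_assoc, S.hff]
lemma ef' : ∀ z : R, S.e * (S.f * z) = 0 := fun z => by rw [← mul_assoc, S.hef, zero_mul]
lemma fe' : ∀ z : R, S.f * (S.e * z) = 0 := fun z => by rw [← mul_assoc, S.hfe, zero_mul]
lemma hMN' : ∀ x y : R, S.e * (x * (S.f * (y * S.e))) = 0 := fun x y => by
  have := S.hMN x y; simpa only [mul_assoc, S.ff'] using this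
lemma hNM' : ∀ x y : R, S.f * (x * (S.e * (y * S.f))) = 0 := fun x y => by
  have := S.hNM x y; simpa only [mul_assoc, S.ee'] using this
lemma split (x y : R) : x * y = x * (S.e * y) + x * (S.f * y) := by
  rw [← mul_add, ← add_mul, S.hef1, one_mul]

section
variable (x y : R)

@[simp] lemma pA_add : S.pA (x + y) = S.pA x + S.pA y := by simp only [pA, pM, pN, pB, mul_assoc, S.ee', S.ff', S.ef', S.fe', S.hee, S.hff, S.hef, S.hfe, S.hMN', S.hNM', mul_zero, zero_mul, add_zero, zero_add, mul_one, one_mul, mul_add, add_mul, mul_sub, sub_mul]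
@[simp] lemma pM_add : S.pM (x + y) = S.pM x + S.pM y := by simp only [pA, pM, pN, pB, mul_assoc, S.ee', S.ff', S.ef', S.fe', S.hee, S.hff, S.hef, S.hfe, S.hMN', S.hNM', mul_zero, zero_mul, add_zero, zero_add, mul_one, one_mul, mul_add, add_mul, mul_sub, sub_mul]
@[simp] lemma pN_add : S.pN (x + y) = S.pN x + S.pN y := by simp only [pA, pM, pN, pB, mul_assoc, S.ee', S.ff', S.ef', S.fe', S.hee, S.hff, S.hef, S.hfe, S.hMN', S.hNM', mul_zero, zero_mul, add_zero, zero_add, mul_one, one_mul, mul_add, add_mul, mul_sub, sub_mul]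
@[simp] lemma pB_add : S.pB (x + y) = S.pB x + S.pB y := by simp only [pA, pM, pN, pB, mul_assoc, S.ee', S.ff', S.ef', S.fe', S.hee, S.hff, S.hef, S.hfe, S.hMN', S.hNM', mul_zero, zero_mul, add_zero, zero_add, mul_one, one_mul, mul_add, add_mul, mul_sub, sub_mul]
@[simp] lemma pA_sub : S.pA (x - y) = S.pA x - S.pA y := by simp only [pA, pM, pN, pB, mul_assoc, S.ee', S.ff', S.ef', S.fe', S.hee, S.hff, S.hef, S.hfe, S.hMN', S.hNM', mul_zero, zero_mul, add_zero, zero_add, mul_one, one_mul, mul_add, add_mul, mul_sub, sub_mul]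
@[simp] lemma pM_sub : S.pM (x - y) = S.pM x - S.pM y := by simp only [pA, pM, pN, pB, mul_assoc, S.ee', S.ff', S.ef', S.fe', S.hee, S.hff, S.hef, S.hfe, S.hMN', S.hNM', mul_zero, zero_mul, add_zero, zero_add, mul_one, one_mul, mul_add, add_mul, mul_sub, sub_mul]
@[simp] lemma pN_sub : S.pN (x - y) = S.pN x - S.pN y := by simp only [pA, pM, pN, pB, mul_assoc, S.ee', S.ff', S.ef', S.fe', S.hee, S.hff, S.hef, S.hfe, S.hMN', S.hNM', mul_zero, zero_mul, add_zero, zero_add, mul_one, one_mul, mul_add, add_mul, mul_sub, sub_mul]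
@[simp] lemma pB_sub : S.pB (x - y) = S.pB x - S.pB y := by simp only [pA, pM, pN, pB, mul_assoc, S.ee', S.ff', S.ef', S.fe', S.hee, S.hff, S.hef, S.hfe, S.hMN', S.hNM', mul_zero, zero_mul, add_zero, zero_add, mul_one, one_mul, mul_add, add_mul, mul_sub, sub_mul]
@[simp] lemma pA_zero : S.pA (0 : R) = 0 := by simp [pA]
@[simp] lemma pM_zero : S.pM (0 : R) = 0 := by simp [pM]
@[simp] lemma pN_zero : S.pN (0 : R) = 0 := by simp [pN]
@[simp] lemma pB_zero : S.pB (0 : R) = 0 := by simp [pB]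
@[simp] lemma pA_neg : S.pA (-x) = - S.pA x := by simp [pA]
@[simp] lemma pM_neg : S.pM (-x) = - S.pM x := by simp [pM]
@[simp] lemma pN_neg : S.pN (-x) = - S.pN x := by simp [pN]
@[simp] lemma pB_neg : S.pB (-x) = - S.pB x := by simp [pB]
@[simp] lemma pA_smul (k : 𝕜) : S.pA (k • x) = k • S.pA x := by
  simp [pA, mul_smul_comm, smul_mul_assoc]
@[simp] lemma pB_smul (k : 𝕜) : S.pB (k • x) = k • S.pB x := by
  simp [pB, mul_smul_comm, smul_mul_assoc]

lemma decomp : x = S.pA x + S.pM x + S.pN x + S.pB x := by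
  have h1 : S.e*x*S.e + S.e*x*S.f = S.e*x := by
    rw [mul_assoc, mul_assoc, ← mul_add, ← mul_add, S.hef1, mul_one]
  have h2 : S.f*x*S.e + S.f*x*S.f = S.f*x := by
    rw [mul_assoc, mul_assoc, ← mul_add, ← mul_add, S.hef1, mul_one]
  have h3 : S.e*x + S.f*x = x := by rw [← add_mul, S.hef1, one_mul]
  simp only [pA, pM, pN, pB, mul_assoc, S.ee', S.ff', S.ef', S.fe', S.hee, S.hff, S.hef, S.hfe, S.hMN', S.hNM', mul_zero, zero_mul, add_zero, zero_add, mul_one, one_mul, mul_add, add_mul, mul_sub, sub_mul]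
  calc x = S.e*x + S.f*x := h3.symm
  _ = (S.e*x*S.e + S.e*x*S.f) + (S.f*x*S.e + S.f*x*S.f) := by rw [h1, h2]
  _ = _ := by simp only [mul_assoc]; abel

-- projections of projections
@[simp] lemma pA_pA : S.pA (S.pA x) = S.pA x := by
  simp only [pA, pM, pN, pB, mul_assoc, S.ee', S.ff', S.ef', S.fe', S.hee, S.hff, S.hef, S.hfe, S.hMN', S.hNM', mul_zero, zero_mul, add_zero, zero_add, mul_one, one_mul, mul_add, add_mul, mul_sub, sub_mul]
@[simp] lemma pA_pM : S.pA (S.pM x) = 0 := by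
  simp only [pA, pM, pN, pB, mul_assoc, S.ee', S.ff', S.ef', S.fe', S.hee, S.hff, S.hef, S.hfe, S.hMN', S.hNM', mul_zero, zero_mul, add_zero, zero_add, mul_one, one_mul, mul_add, add_mul, mul_sub, sub_mul]
@[simp] lemma pA_pN : S.pA (S.pN x) = 0 := by
  simp only [pA, pM, pN, pB, mul_assoc, S.ee', S.ff', S.ef', S.fe', S.hee, S.hff, S.hef, S.hfe, S.hMN', S.hNM', mul_zero, zero_mul, add_zero, zero_add, mul_one, one_mul, mul_add, add_mul, mul_sub, sub_mul]
@[simp] lemma pA_pB : S.pA (S.pB x) = 0 := by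
  simp only [pA, pM, pN, pB, mul_assoc, S.ee', S.ff', S.ef', S.fe', S.hee, S.hff, S.hef, S.hfe, S.hMN', S.hNM', mul_zero, zero_mul, add_zero, zero_add, mul_one, one_mul, mul_add, add_mul, mul_sub, sub_mul]
@[simp] lemma pM_pA : S.pM (S.pA x) = 0 := by
  simp only [pA, pM, pN, pB, mul_assoc, S.ee', S.ff', S.ef', S.fe', S.hee, S.hff, S.hef, S.hfe, S.hMN', S.hNM', mul_zero, zero_mul, add_zero, zero_add, mul_one, one_mul, mul_add, add_mul, mul_sub, sub_mul]
@[simp] lemma pM_pM : S.pM (S.pM x) = S.pM x := by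
  simp only [pA, pM, pN, pB, mul_assoc, S.ee', S.ff', S.ef', S.fe', S.hee, S.hff, S.hef, S.hfe, S.hMN', S.hNM', mul_zero, zero_mul, add_zero, zero_add, mul_one, one_mul, mul_add, add_mul, mul_sub, sub_mul]
@[simp] lemma pM_pN : S.pM (S.pN x) = 0 := by
  simp only [pA, pM, pN, pB, mul_assoc, S.ee', S.ff', S.ef', S.fe', S.hee, S.hff, S.hef, S.hfe, S.hMN', S.hNM', mul_zero, zero_mul, add_zero, zero_add, mul_one, one_mul, mul_add, add_mul, mul_sub, sub_mul]
@[simp] lemma pM_pB : S.pM (S.pB x) = 0 := by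
  simp only [pA, pM, pN, pB, mul_assoc, S.ee', S.ff', S.ef', S.fe', S.hee, S.hff, S.hef, S.hfe, S.hMN', S.hNM', mul_zero, zero_mul, add_zero, zero_add, mul_one, one_mul, mul_add, add_mul, mul_sub, sub_mul]
@[simp] lemma pN_pA : S.pN (S.pA x) = 0 := by
  simp only [pA, pM, pN, pB, mul_assoc, S.ee', S.ff', S.ef', S.fe', S.hee, S.hff, S.hef, S.hfe, S.hMN', S.hNM', mul_zero, zero_mul, add_zero, zero_add, mul_one, one_mul, mul_add, add_mul, mul_sub, sub_mul]
@[simp] lemma pN_pM : S.pN (S.pM x) = 0 := by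
  simp only [pA, pM, pN, pB, mul_assoc, S.ee', S.ff', S.ef', S.fe', S.hee, S.hff, S.hef, S.hfe, S.hMN', S.hNM', mul_zero, zero_mul, add_zero, zero_add, mul_one, one_mul, mul_add, add_mul, mul_sub, sub_mul]
@[simp] lemma pN_pN : S.pN (S.pN x) = S.pN x := by
  simp only [pA, pM, pN, pB, mul_assoc, S.ee', S.ff', S.ef', S.fe', S.hee, S.hff, S.hef, S.hfe, S.hMN', S.hNM', mul_zero, zero_mul, add_zero, zero_add, mul_one, one_mul, mul_add, add_mul, mul_sub, sub_mul]
@[simp] lemma pN_pB : S.pN (S.pB x) = 0 := by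
  simp only [pA, pM, pN, pB, mul_assoc, S.ee', S.ff', S.ef', S.fe', S.hee, S.hff, S.hef, S.hfe, S.hMN', S.hNM', mul_zero, zero_mul, add_zero, zero_add, mul_one, one_mul, mul_add, add_mul, mul_sub, sub_mul]
@[simp] lemma pB_pA : S.pB (S.pA x) = 0 := by
  simp only [pA, pM, pN, pB, mul_assoc, S.ee', S.ff', S.ef', S.fe', S.hee, S.hff, S.hef, S.hfe, S.hMN', S.hNM', mul_zero, zero_mul, add_zero, zero_add, mul_one, one_mul, mul_add, add_mul, mul_sub, sub_mul]
@[simp] lemma pB_pM : S.pB (S.pM x) = 0 := by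
  simp only [pA, pM, pN, pB, mul_assoc, S.ee', S.ff', S.ef', S.fe', S.hee, S.hff, S.hef, S.hfe, S.hMN', S.hNM', mul_zero, zero_mul, add_zero, zero_add, mul_one, one_mul, mul_add, add_mul, mul_sub, sub_mul]
@[simp] lemma pB_pN : S.pB (S.pN x) = 0 := by
  simp only [pA, pM, pN, pB, mul_assoc, S.ee', S.ff', S.ef', S.fe', S.hee, S.hff, S.hef, S.hfe, S.hMN', S.hNM', mul_zero, zero_mul, add_zero, zero_add, mul_one, one_mul, mul_add, add_mul, mul_sub, sub_mul]
@[simp] lemma pB_pB : S.pB (S.pB x) = S.pB x := by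
  simp only [pA, pM, pN, pB, mul_assoc, S.ee', S.ff', S.ef', S.fe', S.hee, S.hff, S.hef, S.hfe, S.hMN', S.hNM', mul_zero, zero_mul, add_zero, zero_add, mul_one, one_mul, mul_add, add_mul, mul_sub, sub_mul]

-- product rules
lemma pA_mul : S.pA (x*y) = S.pA x * S.pA y := by
  simp only [pA]
  rw [S.split x y]
  simp only [mul_add, add_mul, mul_assoc, S.ee', S.ff', S.ef', S.fe', S.hee, S.hff, S.hef,
    S.hfe, S.hMN', S.hNM', mul_zero, zero_mul, add_zero, zero_add]
lemma pB_mul : S.pB (x*y) = S.pB x * S.pB y := by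
  simp only [pB]
  rw [S.split x y]
  simp only [mul_add, add_mul, mul_assoc, S.ee', S.ff', S.ef', S.fe', S.hee, S.hff, S.hef,
    S.hfe, S.hMN', S.hNM', mul_zero, zero_mul, add_zero, zero_add]
lemma pM_mul : S.pM (x*y) = S.pA x * S.pM y + S.pM x * S.pB y := by
  simp only [pA, pM, pN, pB]
  rw [S.split x y]
  simp only [mul_add, add_mul, mul_assoc, S.ee', S.ff', S.ef', S.fe', S.hee, S.hff, S.hef,
    S.hfe, mul_zero, zero_mul, add_zero, zero_add]
lemma pN_mul : S.pN (x*y) = S.pN x * S.pA y + S.pB x * S.pN y := by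
  simp only [pA, pM, pN, pB]
  rw [S.split x y]
  simp only [mul_add, add_mul, mul_assoc, S.ee', S.ff', S.ef', S.fe', S.hee, S.hff, S.hef,
    S.hfe, mul_zero, zero_mul, add_zero, zero_add]

-- zero products
lemma zAB : S.pA x * S.pB y = 0 := by
  simp only [pA, pM, pN, pB, mul_assoc, S.ee', S.ff', S.ef', S.fe', S.hee, S.hff, S.hef, S.hfe, S.hMN', S.hNM', mul_zero, zero_mul, add_zero, zero_add, mul_one, one_mul, mul_add, add_mul, mul_sub, sub_mul]
lemma zAN : S.pA x * S.pN y = 0 := by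
  simp only [pA, pM, pN, pB, mul_assoc, S.ee', S.ff', S.ef', S.fe', S.hee, S.hff, S.hef, S.hfe, S.hMN', S.hNM', mul_zero, zero_mul, add_zero, zero_add, mul_one, one_mul, mul_add, add_mul, mul_sub, sub_mul]
lemma zMA : S.pM x * S.pA y = 0 := by
  simp only [pA, pM, pN, pB, mul_assoc, S.ee', S.ff', S.ef', S.fe', S.hee, S.hff, S.hef, S.hfe, S.hMN', S.hNM', mul_zero, zero_mul, add_zero, zero_add, mul_one, one_mul, mul_add, add_mul, mul_sub, sub_mul]
lemma zMM : S.pM x * S.pM y = 0 := by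
  simp only [pA, pM, pN, pB, mul_assoc, S.ee', S.ff', S.ef', S.fe', S.hee, S.hff, S.hef, S.hfe, S.hMN', S.hNM', mul_zero, zero_mul, add_zero, zero_add, mul_one, one_mul, mul_add, add_mul, mul_sub, sub_mul]
lemma zMN : S.pM x * S.pN y = 0 := by
  simp only [pA, pM, pN, pB, mul_assoc, S.ee', S.ff', S.ef', S.fe', S.hee, S.hff, S.hef, S.hfe, S.hMN', S.hNM', mul_zero, zero_mul, add_zero, zero_add, mul_one, one_mul, mul_add, add_mul, mul_sub, sub_mul]
lemma zNB : S.pN x * S.pB y = 0 := by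
  simp only [pA, pM, pN, pB, mul_assoc, S.ee', S.ff', S.ef', S.fe', S.hee, S.hff, S.hef, S.hfe, S.hMN', S.hNM', mul_zero, zero_mul, add_zero, zero_add, mul_one, one_mul, mul_add, add_mul, mul_sub, sub_mul]
lemma zNN : S.pN x * S.pN y = 0 := by
  simp only [pA, pM, pN, pB, mul_assoc, S.ee', S.ff', S.ef', S.fe', S.hee, S.hff, S.hef, S.hfe, S.hMN', S.hNM', mul_zero, zero_mul, add_zero, zero_add, mul_one, one_mul, mul_add, add_mul, mul_sub, sub_mul]
lemma zNM : S.pN x * S.pM y = 0 := by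
  simp only [pA, pM, pN, pB, mul_assoc, S.ee', S.ff', S.ef', S.fe', S.hee, S.hff, S.hef, S.hfe, S.hMN', S.hNM', mul_zero, zero_mul, add_zero, zero_add, mul_one, one_mul, mul_add, add_mul, mul_sub, sub_mul]
lemma zBA : S.pB x * S.pA y = 0 := by
  simp only [pA, pM, pN, pB, mul_assoc, S.ee', S.ff', S.ef', S.fe', S.hee, S.hff, S.hef, S.hfe, S.hMN', S.hNM', mul_zero, zero_mul, add_zero, zero_add, mul_one, one_mul, mul_add, add_mul, mul_sub, sub_mul]
lemma zBM : S.pB x * S.pM y = 0 := by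
  simp only [pA, pM, pN, pB, mul_assoc, S.ee', S.ff', S.ef', S.fe', S.hee, S.hff, S.hef, S.hfe, S.hMN', S.hNM', mul_zero, zero_mul, add_zero, zero_add, mul_one, one_mul, mul_add, add_mul, mul_sub, sub_mul]

-- unit-like actions
@[simp] lemma e_pA : S.e * S.pA x = S.pA x := by simp only [pA, pM, pN, pB, mul_assoc, S.ee', S.ff', S.ef', S.fe', S.hee, S.hff, S.hef, S.hfe, S.hMN', S.hNM', mul_zero, zero_mul, add_zero, zero_add, mul_one, one_mul, mul_add, add_mul, mul_sub, sub_mul]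
@[simp] lemma pA_e : S.pA x * S.e = S.pA x := by simp only [pA, pM, pN, pB, mul_assoc, S.ee', S.ff', S.ef', S.fe', S.hee, S.hff, S.hef, S.hfe, S.hMN', S.hNM', mul_zero, zero_mul, add_zero, zero_add, mul_one, one_mul, mul_add, add_mul, mul_sub, sub_mul]
@[simp] lemma e_pM : S.e * S.pM x = S.pM x := by simp only [pA, pM, pN, pB, mul_assoc, S.ee', S.ff', S.ef', S.fe', S.hee, S.hff, S.hef, S.hfe, S.hMN', S.hNM', mul_zero, zero_mul, add_zero, zero_add, mul_one, one_mul, mul_add, add_mul, mul_sub, sub_mul]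
@[simp] lemma pM_f : S.pM x * S.f = S.pM x := by simp only [pA, pM, pN, pB, mul_assoc, S.ee', S.ff', S.ef', S.fe', S.hee, S.hff, S.hef, S.hfe, S.hMN', S.hNM', mul_zero, zero_mul, add_zero, zero_add, mul_one, one_mul, mul_add, add_mul, mul_sub, sub_mul]
@[simp] lemma f_pN : S.f * S.pN x = S.pN x := by simp only [pA, pM, pN, pB, mul_assoc, S.ee', S.ff', S.ef', S.fe', S.hee, S.hff, S.hef, S.hfe, S.hMN', S.hNM', mul_zero, zero_mul, add_zero, zero_add, mul_one, one_mul, mul_add, add_mul, mul_sub, sub_mul]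
@[simp] lemma pN_e : S.pN x * S.e = S.pN x := by simp only [pA, pM, pN, pB, mul_assoc, S.ee', S.ff', S.ef', S.fe', S.hee, S.hff, S.hef, S.hfe, S.hMN', S.hNM', mul_zero, zero_mul, add_zero, zero_add, mul_one, one_mul, mul_add, add_mul, mul_sub, sub_mul]
@[simp] lemma f_pB : S.f * S.pB x = S.pB x := by simp only [pA, pM, pN, pB, mul_assoc, S.ee', S.ff', S.ef', S.fe', S.hee, S.hff, S.hef, S.hfe, S.hMN', S.hNM', mul_zero, zero_mul, add_zero, zero_add, mul_one, one_mul, mul_add, add_mul, mul_sub, sub_mul]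
@[simp] lemma pB_f : S.pB x * S.f = S.pB x := by simp only [pA, pM, pN, pB, mul_assoc, S.ee', S.ff', S.ef', S.fe', S.hee, S.hff, S.hef, S.hfe, S.hMN', S.hNM', mul_zero, zero_mul, add_zero, zero_add, mul_one, one_mul, mul_add, add_mul, mul_sub, sub_mul]
@[simp] lemma f_pA : S.f * S.pA x = 0 := by simp only [pA, pM, pN, pB, mul_assoc, S.ee', S.ff', S.ef', S.fe', S.hee, S.hff, S.hef, S.hfe, S.hMN', S.hNM', mul_zero, zero_mul, add_zero, zero_add, mul_one, one_mul, mul_add, add_mul, mul_sub, sub_mul]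
@[simp] lemma pA_f : S.pA x * S.f = 0 := by simp only [pA, pM, pN, pB, mul_assoc, S.ee', S.ff', S.ef', S.fe', S.hee, S.hff, S.hef, S.hfe, S.hMN', S.hNM', mul_zero, zero_mul, add_zero, zero_add, mul_one, one_mul, mul_add, add_mul, mul_sub, sub_mul]
@[simp] lemma f_pM : S.f * S.pM x = 0 := by simp only [pA, pM, pN, pB, mul_assoc, S.ee', S.ff', S.ef', S.fe', S.hee, S.hff, S.hef, S.hfe, S.hMN', S.hNM', mul_zero, zero_mul, add_zero, zero_add, mul_one, one_mul, mul_add, add_mul, mul_sub, sub_mul]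
@[simp] lemma pM_e : S.pM x * S.e = 0 := by simp only [pA, pM, pN, pB, mul_assoc, S.ee', S.ff', S.ef', S.fe', S.hee, S.hff, S.hef, S.hfe, S.hMN', S.hNM', mul_zero, zero_mul, add_zero, zero_add, mul_one, one_mul, mul_add, add_mul, mul_sub, sub_mul]
@[simp] lemma e_pN : S.e * S.pN x = 0 := by simp only [pA, pM, pN, pB, mul_assoc, S.ee', S.ff', S.ef', S.fe', S.hee, S.hff, S.hef, S.hfe, S.hMN', S.hNM', mul_zero, zero_mul, add_zero, zero_add, mul_one, one_mul, mul_add, add_mul, mul_sub, sub_mul]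
@[simp] lemma pN_f : S.pN x * S.f = 0 := by simp only [pA, pM, pN, pB, mul_assoc, S.ee', S.ff', S.ef', S.fe', S.hee, S.hff, S.hef, S.hfe, S.hMN', S.hNM', mul_zero, zero_mul, add_zero, zero_add, mul_one, one_mul, mul_add, add_mul, mul_sub, sub_mul]
@[simp] lemma e_pB : S.e * S.pB x = 0 := by simp only [pA, pM, pN, pB, mul_assoc, S.ee', S.ff', S.ef', S.fe', S.hee, S.hff, S.hef, S.hfe, S.hMN', S.hNM', mul_zero, zero_mul, add_zero, zero_add, mul_one, one_mul, mul_add, add_mul, mul_sub, sub_mul]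
@[simp] lemma pB_e : S.pB x * S.e = 0 := by simp only [pA, pM, pN, pB, mul_assoc, S.ee', S.ff', S.ef', S.fe', S.hee, S.hff, S.hef, S.hfe, S.hMN', S.hNM', mul_zero, zero_mul, add_zero, zero_add, mul_one, one_mul, mul_add, add_mul, mul_sub, sub_mul]

-- special values
@[simp] lemma pA_e' : S.pA S.e = S.e := by simp only [pA, pM, pN, pB, mul_assoc, S.ee', S.ff', S.ef', S.fe', S.hee, S.hff, S.hef, S.hfe, S.hMN', S.hNM', mul_zero, zero_mul, add_zero, zero_add, mul_one, one_mul, mul_add, add_mul, mul_sub, sub_mul]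
@[simp] lemma pM_e' : S.pM S.e = 0 := by simp only [pA, pM, pN, pB, mul_assoc, S.ee', S.ff', S.ef', S.fe', S.hee, S.hff, S.hef, S.hfe, S.hMN', S.hNM', mul_zero, zero_mul, add_zero, zero_add, mul_one, one_mul, mul_add, add_mul, mul_sub, sub_mul]
@[simp] lemma pN_e' : S.pN S.e = 0 := by simp only [pA, pM, pN, pB, mul_assoc, S.ee', S.ff', S.ef', S.fe', S.hee, S.hff, S.hef, S.hfe, S.hMN', S.hNM', mul_zero, zero_mul, add_zero, zero_add, mul_one, one_mul, mul_add, add_mul, mul_sub, sub_mul]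
@[simp] lemma pB_e' : S.pB S.e = 0 := by simp only [pA, pM, pN, pB, mul_assoc, S.ee', S.ff', S.ef', S.fe', S.hee, S.hff, S.hef, S.hfe, S.hMN', S.hNM', mul_zero, zero_mul, add_zero, zero_add, mul_one, one_mul, mul_add, add_mul, mul_sub, sub_mul]
@[simp] lemma pA_f' : S.pA S.f = 0 := by simp only [pA, pM, pN, pB, mul_assoc, S.ee', S.ff', S.ef', S.fe', S.hee, S.hff, S.hef, S.hfe, S.hMN', S.hNM', mul_zero, zero_mul, add_zero, zero_add, mul_one, one_mul, mul_add, add_mul, mul_sub, sub_mul]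
@[simp] lemma pM_f' : S.pM S.f = 0 := by simp only [pA, pM, pN, pB, mul_assoc, S.ee', S.ff', S.ef', S.fe', S.hee, S.hff, S.hef, S.hfe, S.hMN', S.hNM', mul_zero, zero_mul, add_zero, zero_add, mul_one, one_mul, mul_add, add_mul, mul_sub, sub_mul]
@[simp] lemma pN_f' : S.pN S.f = 0 := by simp only [pA, pM, pN, pB, mul_assoc, S.ee', S.ff', S.ef', S.fe', S.hee, S.hff, S.hef, S.hfe, S.hMN', S.hNM', mul_zero, zero_mul, add_zero, zero_add, mul_one, one_mul, mul_add, add_mul, mul_sub, sub_mul]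
@[simp] lemma pB_f' : S.pB S.f = S.f := by simp only [pA, pM, pN, pB, mul_assoc, S.ee', S.ff', S.ef', S.fe', S.hee, S.hff, S.hef, S.hfe, S.hMN', S.hNM', mul_zero, zero_mul, add_zero, zero_add, mul_one, one_mul, mul_add, add_mul, mul_sub, sub_mul]
@[simp] lemma pA_one : S.pA (1 : R) = S.e := by simp only [pA, pM, pN, pB, mul_assoc, S.ee', S.ff', S.ef', S.fe', S.hee, S.hff, S.hef, S.hfe, S.hMN', S.hNM', mul_zero, zero_mul, add_zero, zero_add, mul_one, one_mul, mul_add, add_mul, mul_sub, sub_mul]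
@[simp] lemma pM_one : S.pM (1 : R) = 0 := by simp only [pA, pM, pN, pB, mul_assoc, S.ee', S.ff', S.ef', S.fe', S.hee, S.hff, S.hef, S.hfe, S.hMN', S.hNM', mul_zero, zero_mul, add_zero, zero_add, mul_one, one_mul, mul_add, add_mul, mul_sub, sub_mul]
@[simp] lemma pN_one : S.pN (1 : R) = 0 := by simp only [pA, pM, pN, pB, mul_assoc, S.ee', S.ff', S.ef', S.fe', S.hee, S.hff, S.hef, S.hfe, S.hMN', S.hNM', mul_zero, zero_mul, add_zero, zero_add, mul_one, one_mul, mul_add, add_mul, mul_sub, sub_mul]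
@[simp] lemma pB_one : S.pB (1 : R) = S.f := by simp only [pA, pM, pN, pB, mul_assoc, S.ee', S.ff', S.ef', S.fe', S.hee, S.hff, S.hef, S.hfe, S.hMN', S.hNM', mul_zero, zero_mul, add_zero, zero_add, mul_one, one_mul, mul_add, add_mul, mul_sub, sub_mul]

end

lemma cent {z : R} (hz : z ∈ Set.center R) : ∀ g : R, g * z = z * g :=
  Semigroup.mem_center_iff.1 hz

lemma cmr {c : R} (hc : c ∈ Set.center R) (u v : R) : u * (c * v) = c * (u * v) := by
  rw [← mul_assoc, cent hc u, mul_assoc]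

lemma pA_central {z : R} (hz : z ∈ Set.center R) : S.pA z = z * S.e := by
  simp only [pA]; rw [cent hz S.e, mul_assoc, S.hee]
lemma pB_central {z : R} (hz : z ∈ Set.center R) : S.pB z = z * S.f := by
  simp only [pB]; rw [cent hz S.f, mul_assoc, S.hff]
lemma pM_central {z : R} (hz : z ∈ Set.center R) : S.pM z = 0 := by
  simp only [pM]; rw [cent hz S.e, mul_assoc, S.hef, mul_zero]
lemma pN_central {z : R} (hz : z ∈ Set.center R) : S.pN z = 0 := by
  simp only [pN]; rw [cent hz S.f, mul_assoc, S.hfe, mul_zero]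

lemma pA_sum {ι : Type*} (s : Finset ι) (g : ι → R) :
    S.pA (∑ i ∈ s, g i) = ∑ i ∈ s, S.pA (g i) :=
  map_sum (AddMonoidHom.mk' S.pA (S.pA_add)) g s
lemma pM_sum {ι : Type*} (s : Finset ι) (g : ι → R) :
    S.pM (∑ i ∈ s, g i) = ∑ i ∈ s, S.pM (g i) :=
  map_sum (AddMonoidHom.mk' S.pM (S.pM_add)) g s
lemma pN_sum {ι : Type*} (s : Finset ι) (g : ι → R) :
    S.pN (∑ i ∈ s, g i) = ∑ i ∈ s, S.pN (g i) :=
  map_sum (AddMonoidHom.mk' S.pN (S.pN_add)) g s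
lemma pB_sum {ι : Type*} (s : Finset ι) (g : ι → R) :
    S.pB (∑ i ∈ s, g i) = ∑ i ∈ s, S.pB (g i) :=
  map_sum (AddMonoidHom.mk' S.pB (S.pB_add)) g s

-- uniqueness of central elements by their f-part
lemma central_unique {z z' : R} (hz : z ∈ Set.center R) (hz' : z' ∈ Set.center R)
    (h : z * S.f = z' * S.f) : z = z' := by
  have hc : (z - z') ∈ Set.center R := by
    rw [sub_eq_add_neg]
    exact Set.add_mem_center hz (Set.neg_mem_center hz')
  set c := z - z' with hcdef
  have hcf : c * S.f = 0 := by rw [hcdef, sub_mul, h, sub_self]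
  have key : c * S.e = 0 := by
    apply S.hwfA (c * S.e)
    · simp only [mul_assoc, S.hee]
      rw [cmr hc, S.hee]
    · intro m
      simp only [mul_assoc, S.ee']
      rw [← cent hc]
      simp only [mul_assoc]
      rw [cent hc S.f, hcf, mul_zero, mul_zero]
    · intro m
      simp only [mul_assoc]
      rw [cmr hc S.e S.e, S.hee, cmr hc m, cmr hc S.f, ← mul_assoc, hcf, zero_mul]
  have : c = 0 := by
    have h1 : c * (S.e + S.f) = 0 := by rw [mul_add, key, hcf, add_zero]
    rwa [S.hef1, mul_one] at h1
  exact sub_eq_zero.1 this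

noncomputable def pick (n : ℕ) (a : R) : R :=
  Classical.epsilon fun z => z ∈ Set.center R ∧ z * S.f = S.f * (S.L n a) * S.f

lemma pick_mem {n : ℕ} {a : R}
    (h : ∃ z, z ∈ Set.center R ∧ z * S.f = S.f * (S.L n a) * S.f) :
    S.pick n a ∈ Set.center R ∧ S.pick n a * S.f = S.pB (S.L n a) :=
  Classical.epsilon_spec h

lemma pick_eq {n : ℕ} {a z : R} (hz : z ∈ Set.center R)
    (hzf : z * S.f = S.pB (S.L n a)) : S.pick n a = z := by
  have h : ∃ z', z' ∈ Set.center R ∧ z' * S.f = S.f * (S.L n a) * S.f := ⟨z, hz, hzf⟩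
  exact S.central_unique (S.pick_mem h).1 hz (by rw [(S.pick_mem h).2, ← hzf])

lemma pick_zero (n : ℕ) : S.pick n 0 = 0 :=
  S.pick_eq (Set.zero_mem_center) (by simp [pB])

noncomputable def tau (n : ℕ) (x : R) : R :=
  S.pick n (S.pA x) + S.swap.pick n (S.swap.pA x)

lemma tau_swap (n : ℕ) (x : R) : S.swap.tau n x = S.tau n x := by
  show S.swap.pick n (S.swap.pA x) + S.swap.swap.pick n (S.swap.swap.pA x) = _
  rw [S.swap_swap]; exact add_comm _ _

noncomputable def T (n : ℕ) (x : R) : R := if n = 0 then 0 else S.tau n x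

noncomputable def D (n : ℕ) (x : R) : R := S.L n x - S.T n x

lemma T_swap : S.swap.T = S.T := by
  funext n x; unfold T; rw [S.tau_swap]

lemma D_swap : S.swap.D = S.D := by
  funext n x; unfold D; rw [S.T_swap, S.swap_L]

@[simp] lemma T_zero' (x : R) : S.T 0 x = 0 := by simp [T]

@[simp] lemma D_zero' (x : R) : S.D 0 x = x := by
  simp [D, S.hL0]

lemma L_eq_D_add_T (n : ℕ) (x : R) : S.L n x = S.D n x + S.T n x := by
  rw [D, sub_add_cancel]

def HD (n : ℕ) : Prop :=
  ∀ x y : R, S.D n (x*y) = ∑ ij ∈ antidiagonal n, S.D ij.1 x * S.D ij.2 y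

lemma HD_swap {n : ℕ} : S.swap.HD n ↔ S.HD n := by unfold HD; rw [S.D_swap]

lemma HD0 : S.HD 0 := by
  intro x y
  simp [Finset.Nat.antidiagonal_zero]

def Good (n : ℕ) : Prop :=
  S.HD n ∧ (∀ x, S.T n x ∈ Set.center R) ∧
    (∀ x y, S.T n (x+y) = S.T n x + S.T n y) ∧
    (∀ (k : 𝕜) (x), S.T n (k • x) = k • S.T n x) ∧
    (∀ x y, S.T n (x*y - y*x) = 0)

lemma Good_swap {n : ℕ} : S.swap.Good n ↔ S.Good n := by
  unfold Good; rw [S.T_swap, HD_swap]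

lemma Good0 : S.Good 0 :=
  ⟨S.HD0, fun x => by exact Set.zero_mem_center, by simp, by simp, by simp⟩

lemma D_add {n : ℕ} (h : ∀ x y, S.T n (x+y) = S.T n x + S.T n y) (x y : R) :
    S.D n (x+y) = S.D n x + S.D n y := by
  simp only [D, map_add, h]; abel

lemma D_sub {n : ℕ} (h : ∀ x y, S.T n (x+y) = S.T n x + S.T n y) (x y : R) :
    S.D n (x-y) = S.D n x - S.D n y := by
  have h0 : S.T n 0 = 0 := by
    have := h 0 0; simpa using this.symm
  have hs : ∀ a b, S.T n (a-b) = S.T n a - S.T n b := by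
    intro a b
    have := h (a-b) b
    rw [sub_add_cancel] at this
    rw [eq_sub_iff_add_eq, ← this]
  simp only [D, map_sub, hs]; abel

lemma comm_central {P Q s t : R} (hs : s ∈ Set.center R) (ht : t ∈ Set.center R) :
    (P+s)*(Q+t) - (Q+t)*(P+s) = P*Q - Q*P := by
  simp only [add_mul, mul_add]
  rw [cent ht P, ← cent hs Q, ← cent hs t]
  abel

section Derived
variable {K : ℕ}

/-- A and B parts of `D k e` vanish. -/
lemma uAB (hHD : ∀ k, k ≤ K → S.HD k) :
    ∀ k, k ≤ K → 1 ≤ k → S.pA (S.D k S.e) = 0 ∧ S.pB (S.D k S.e) = 0 := by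
  intro k
  induction k using Nat.strong_induction_on with
  | _ k ih =>
    intro hkK hk1
    have he : S.D k S.e = ∑ ij ∈ antidiagonal k, S.D ij.1 S.e * S.D ij.2 S.e := by
      have := hHD k hkK S.e S.e; rwa [S.hee] at this
    constructor
    · have h1 : S.pA (S.D k S.e) =
          ∑ ij ∈ antidiagonal k, S.pA (S.D ij.1 S.e) * S.pA (S.D ij.2 S.e) := by
        rw [he, S.pA_sum]
        exact Finset.sum_congr rfl fun ij _ => S.pA_mul _ _
      have h2 : ∑ ij ∈ antidiagonal k, S.pA (S.D ij.1 S.e) * S.pA (S.D ij.2 S.e)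
          = S.pA (S.D 0 S.e) * S.pA (S.D k S.e) + S.pA (S.D k S.e) * S.pA (S.D 0 S.e) := by
        exact sum_ad_boundary hk1 _ (fun i j hij hi hj => by
          rw [(ih i (by omega) (by omega) hi).1, zero_mul])
      rw [h2] at h1
      simp only [D_zero', pA_e', e_pA, pA_e] at h1
      nth_rewrite 1 [← add_zero (S.pA (S.D k S.e))] at h1
      exact (add_left_cancel h1).symm
    · have h1 : S.pB (S.D k S.e) =
          ∑ ij ∈ antidiagonal k, S.pB (S.D ij.1 S.e) * S.pB (S.D ij.2 S.e) := by
        rw [he, S.pB_sum]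
        exact Finset.sum_congr rfl fun ij _ => S.pB_mul _ _
      have h2 : ∑ ij ∈ antidiagonal k, S.pB (S.D ij.1 S.e) * S.pB (S.D ij.2 S.e) = 0 := by
        apply Finset.sum_eq_zero
        intro ij hij
        rcases Nat.eq_zero_or_pos ij.1 with h0 | hpos
        · rw [h0, D_zero', pB_e', zero_mul]
        · rcases Nat.eq_zero_or_pos ij.2 with h0' | hpos'
          · rw [h0', D_zero', pB_e', mul_zero]
          · have hij' := Finset.HasAntidiagonal.mem_antidiagonal.1 hij
            rw [(ih ij.1 (by omega) (by omega) hpos).2, zero_mul]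
      rw [h2] at h1; exact h1

/-- `D k 1 = 0` for `1 ≤ k`. -/
lemma Done (hHD : ∀ k, k ≤ K → S.HD k) :
    ∀ k, k ≤ K → 1 ≤ k → S.D k (1 : R) = 0 := by
  intro k
  induction k using Nat.strong_induction_on with
  | _ k ih =>
    intro hkK hk1
    have he : S.D k (1 : R) = ∑ ij ∈ antidiagonal k, S.D ij.1 (1:R) * S.D ij.2 (1:R) := by
      have := hHD k hkK (1:R) (1:R); rwa [one_mul] at this
    have h2 : ∑ ij ∈ antidiagonal k, S.D ij.1 (1:R) * S.D ij.2 (1:R)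
        = S.D 0 (1:R) * S.D k (1:R) + S.D k (1:R) * S.D 0 (1:R) := by
      exact sum_ad_boundary hk1 _ (fun i j hij hi hj => by
        rw [ih i (by omega) (by omega) hi, zero_mul])
    rw [h2, D_zero', one_mul, mul_one] at he
    nth_rewrite 1 [← add_zero (S.D k (1:R))] at he
    exact (add_left_cancel he).symm

/-- B part of `D k a` vanishes for `a` of A-form. -/
lemma ApresB (hHD : ∀ k, k ≤ K → S.HD k) :
    ∀ k, k ≤ K → ∀ x, S.pB (S.D k (S.pA x)) = 0 := by
  intro k hkK x
  have he : S.D k (S.pA x) = ∑ ij ∈ antidiagonal k, S.D ij.1 (S.pA x) * S.D ij.2 S.e := by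
    have := hHD k hkK (S.pA x) S.e; rwa [S.pA_e] at this
  rw [he, S.pB_sum]
  apply Finset.sum_eq_zero
  intro ij hij
  rw [S.pB_mul]
  rcases Nat.eq_zero_or_pos ij.2 with h0 | hpos
  · rw [h0, D_zero', pB_e', mul_zero]
  · rw [(S.uAB hHD ij.2 (by have := Finset.HasAntidiagonal.mem_antidiagonal.1 hij; omega) hpos).2, mul_zero]

/-- A and B parts of `D k f` vanish (needs additivity of `T`). -/
lemma uABf (hHD : ∀ k, k ≤ K → S.HD k)
    (hTadd : ∀ k, k ≤ K → ∀ x y, S.T k (x+y) = S.T k x + S.T k y) :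
    ∀ k, k ≤ K → 1 ≤ k → S.pA (S.D k S.f) = 0 ∧ S.pB (S.D k S.f) = 0 := by
  intro k hkK hk1
  have hf : S.f = 1 - S.e := by rw [← S.hef1]; abel
  have hsub : S.D k S.f = S.D k 1 - S.D k S.e := by
    rw [hf]; exact S.D_sub (hTadd k hkK) 1 S.e
  rw [hsub, S.Done hHD k hkK hk1, zero_sub]
  constructor
  · rw [S.pA_neg, (S.uAB hHD k hkK hk1).1, neg_zero]
  · rw [S.pB_neg, (S.uAB hHD k hkK hk1).2, neg_zero]

/-- Components of `D k m` for `m` of M-form. -/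
lemma MpresB (hHD : ∀ k, k ≤ K → S.HD k) :
    ∀ k, k ≤ K → ∀ x, S.pB (S.D k (S.pM x)) = 0 := by
  intro k hkK x
  have he : S.D k (S.pM x) = ∑ ij ∈ antidiagonal k, S.D ij.1 S.e * S.D ij.2 (S.pM x) := by
    have := hHD k hkK S.e (S.pM x); rwa [S.e_pM] at this
  rw [he, S.pB_sum]
  apply Finset.sum_eq_zero
  intro ij hij
  rw [S.pB_mul]
  rcases Nat.eq_zero_or_pos ij.1 with h0 | hpos
  · rw [h0, D_zero', pB_e', zero_mul]
  · rw [(S.uAB hHD ij.1 (by have := Finset.HasAntidiagonal.mem_antidiagonal.1 hij; omega) hpos).2, zero_mul]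

lemma MpresA (hHD : ∀ k, k ≤ K → S.HD k)
    (hTadd : ∀ k, k ≤ K → ∀ x y, S.T k (x+y) = S.T k x + S.T k y) :
    ∀ k, k ≤ K → ∀ x, S.pA (S.D k (S.pM x)) = 0 := by
  intro k hkK x
  have he : S.D k (S.pM x) = ∑ ij ∈ antidiagonal k, S.D ij.1 (S.pM x) * S.D ij.2 S.f := by
    have := hHD k hkK (S.pM x) S.f; rwa [S.pM_f] at this
  rw [he, S.pA_sum]
  apply Finset.sum_eq_zero
  intro ij hij
  rw [S.pA_mul]
  rcases Nat.eq_zero_or_pos ij.2 with h0 | hpos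
  · rw [h0, D_zero', pA_f', mul_zero]
  · rw [(S.uABf hHD hTadd ij.2 (by have := Finset.HasAntidiagonal.mem_antidiagonal.1 hij; omega) hpos).1,
      mul_zero]

lemma MpresN (hHD : ∀ k, k ≤ K → S.HD k)
    (hTadd : ∀ k, k ≤ K → ∀ x y, S.T k (x+y) = S.T k x + S.T k y) :
    ∀ k, k ≤ K → ∀ x, S.pN (S.D k (S.pM x)) = 0 := by
  intro k hkK x
  have he : S.D k (S.pM x) = ∑ ij ∈ antidiagonal k, S.D ij.1 S.e * S.D ij.2 (S.pM x) := by
    have := hHD k hkK S.e (S.pM x); rwa [S.e_pM] at this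
  rw [he, S.pN_sum]
  apply Finset.sum_eq_zero
  intro ij hij
  rw [S.pN_mul]
  have hij' := Finset.HasAntidiagonal.mem_antidiagonal.1 hij
  rcases Nat.eq_zero_or_pos ij.1 with h0 | hpos
  · rw [h0, D_zero', pN_e', pB_e', zero_mul, zero_mul, add_zero]
  · rw [(S.uAB hHD ij.1 (by omega) hpos).2,
      S.MpresA hHD hTadd ij.2 (by omega) x, mul_zero, zero_mul, add_zero]

end Derived

section Phase1
variable {n : ℕ}

lemma comm_central' {P Q s : R} (hs : s ∈ Set.center R) :
    (P+s)*Q - Q*(P+s) = P*Q - Q*P := by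
  simp only [add_mul, mul_add]
  rw [← cent hs Q]
  abel

lemma tMlt (IH : ∀ k, k < n → S.Good k) {k : ℕ} (hk : k < n) (x : R) :
    S.T k (S.pM x) = 0 := by
  have h : S.e * (S.pM x) - (S.pM x) * S.e = S.pM x := by rw [S.e_pM, S.pM_e, sub_zero]
  have h2 := (IH k hk).2.2.2.2 S.e (S.pM x)
  rwa [h] at h2

lemma tNlt (IH : ∀ k, k < n → S.Good k) {k : ℕ} (hk : k < n) (x : R) :
    S.T k (S.pN x) = 0 := by
  have h : (S.pN x) * S.e - S.e * (S.pN x) = S.pN x := by rw [S.e_pN, S.pN_e, sub_zero]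
  have h2 := (IH k hk).2.2.2.2 (S.pN x) S.e
  rwa [h] at h2

/-- The B part of `L n a` centralizes B (existence of the central witness). -/
lemma exStep (hn : 1 ≤ n) (IH : ∀ k, k < n → S.Good k) :
    ∀ x : R, ∃ z, z ∈ Set.center R ∧ z * S.f = S.f * (S.L n (S.pA x)) * S.f := by
  intro x
  have hHDlt : ∀ k, k < n → S.HD k := fun k hk => (IH k hk).1
  have hHDle : ∀ k, k ≤ n - 1 → S.HD k := fun k hk => hHDlt k (by omega)
  have key : ∀ y : R, S.pB (S.L n (S.pA x)) * S.pB y = S.pB y * S.pB (S.L n (S.pA x)) := by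
    intro y
    have hcomm : S.pA x * S.pB y - S.pB y * S.pA x = 0 := by
      rw [S.zAB, S.zBA, sub_zero]
    have h := S.hLie n (S.pA x) (S.pB y)
    rw [hcomm, map_zero] at h
    have h2 : (0:R) = ∑ ij ∈ antidiagonal n,
        S.pB (S.L ij.1 (S.pA x) * S.L ij.2 (S.pB y) -
          S.L ij.2 (S.pB y) * S.L ij.1 (S.pA x)) := by
      calc (0:R) = S.pB 0 := (S.pB_zero).symm
      _ = _ := by rw [h, S.pB_sum]
    have h3 : ∑ ij ∈ antidiagonal n,
        S.pB (S.L ij.1 (S.pA x) * S.L ij.2 (S.pB y) -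
          S.L ij.2 (S.pB y) * S.L ij.1 (S.pA x))
        = S.pB (S.L n (S.pA x) * S.pB y - S.pB y * S.L n (S.pA x)) := by
      have := sum_ad_single_left (n := n)
        (fun ij => S.pB (S.L ij.1 (S.pA x) * S.L ij.2 (S.pB y) -
          S.L ij.2 (S.pB y) * S.L ij.1 (S.pA x)))
        (fun i j hij hj => ?_)
      · rw [this]
        dsimp only
        have h0 : S.L 0 (S.pB y) = S.pB y := by rw [S.hL0]; rfl
        rw [h0]
      -- middle and i=0 terms vanish in pB
      · dsimp only
        rcases Nat.eq_zero_or_pos i with h0 | hpos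
        · subst h0
          have h0 : S.L 0 (S.pA x) = S.pA x := by rw [S.hL0]; rfl
          rw [h0, S.pB_sub, S.pB_mul, S.pB_mul, S.pB_pA, zero_mul, mul_zero, sub_zero]
        · -- 1 ≤ i, 1 ≤ j so i ≤ n-1
          have hin : i < n := by omega
          have hjn : j < n := by omega
          rw [S.L_eq_D_add_T i, S.L_eq_D_add_T j,
            comm_central ((IH i hin).2.1 (S.pA x)) ((IH j hjn).2.1 (S.pB y)),
            S.pB_sub, S.pB_mul, S.pB_mul,
            S.ApresB hHDle i (by omega) x, zero_mul, mul_zero, sub_zero]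
    rw [h3, S.pB_sub, S.pB_mul, S.pB_mul, S.pB_pB] at h2
    exact sub_eq_zero.1 h2.symm
  have hb : S.f * (S.pB (S.L n (S.pA x))) * S.f = S.pB (S.L n (S.pA x)) := S.pB_pB _
  obtain ⟨z, hz, hzf⟩ := S.hZB (S.pB (S.L n (S.pA x))) hb (fun y => key y)
  exact ⟨z, hz, hzf⟩

/-- B part of `L n` of an A-commutator vanishes. -/
lemma commB (hn : 1 ≤ n) (IH : ∀ k, k < n → S.Good k) (x y : R) :
    S.pB (S.L n (S.pA x * S.pA y - S.pA y * S.pA x)) = 0 := by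
  have hHDle : ∀ k, k ≤ n - 1 → S.HD k := fun k hk => (IH k (by omega)).1
  rw [S.hLie n (S.pA x) (S.pA y), S.pB_sum]
  apply Finset.sum_eq_zero
  intro ij hij
  have hij' := Finset.HasAntidiagonal.mem_antidiagonal.1 hij
  rcases Nat.eq_zero_or_pos ij.1 with h0 | hpos
  · have h00 : S.L 0 (S.pA x) = S.pA x := by rw [S.hL0]; rfl
    rw [h0, h00, S.pB_sub, S.pB_mul, S.pB_mul, S.pB_pA, zero_mul, mul_zero, sub_zero]
  · rcases Nat.eq_zero_or_pos ij.2 with h0' | hpos'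
    · have h00 : S.L 0 (S.pA y) = S.pA y := by rw [S.hL0]; rfl
      rw [h0', h00, S.pB_sub, S.pB_mul, S.pB_mul, S.pB_pA, zero_mul, mul_zero, sub_zero]
    · have hin : ij.1 < n := by omega
      have hjn : ij.2 < n := by omega
      rw [S.L_eq_D_add_T ij.1, S.L_eq_D_add_T ij.2,
        comm_central ((IH ij.1 hin).2.1 (S.pA x)) ((IH ij.2 hjn).2.1 (S.pA y)),
        S.pB_sub, S.pB_mul, S.pB_mul,
        S.ApresB hHDle ij.1 (by omega) x, zero_mul, mul_zero, sub_zero]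

end Phase1

section Phase1b
variable {n : ℕ}

/-- (i) `pA (L n e)` centralizes A. -/
lemma lieEA (hn : 1 ≤ n) (IH : ∀ k, k < n → S.Good k) (y : R) :
    S.pA (S.L n S.e) * S.pA y = S.pA y * S.pA (S.L n S.e) := by
  have hHDle : ∀ k, k ≤ n - 1 → S.HD k := fun k hk => (IH k (by omega)).1
  have hcomm : S.e * S.pA y - S.pA y * S.e = 0 := by rw [S.e_pA, S.pA_e, sub_self]
  have h := S.hLie n S.e (S.pA y)
  rw [hcomm, map_zero] at h
  have h2 : (0:R) = ∑ ij ∈ antidiagonal n,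
      S.pA (S.L ij.1 S.e * S.L ij.2 (S.pA y) - S.L ij.2 (S.pA y) * S.L ij.1 S.e) := by
    calc (0:R) = S.pA 0 := S.pA_zero.symm
    _ = _ := by rw [h, S.pA_sum]
  have hred := sum_ad_single_left (n := n)
    (fun ij => S.pA (S.L ij.1 S.e * S.L ij.2 (S.pA y) - S.L ij.2 (S.pA y) * S.L ij.1 S.e))
    (fun i j hij hj => ?_)
  · rw [hred] at h2
    dsimp only at h2
    have h00 : S.L 0 (S.pA y) = S.pA y := by rw [S.hL0]; rfl
    rw [h00, S.pA_sub, S.pA_mul, S.pA_mul, S.pA_pA] at h2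
    exact sub_eq_zero.1 h2.symm
  · dsimp only
    rcases Nat.eq_zero_or_pos i with h0 | hpos
    · subst h0
      have h00 : S.L 0 S.e = S.e := by rw [S.hL0]; rfl
      rw [h00, S.pA_sub, S.pA_mul, S.pA_mul, S.pA_e', S.e_pA, S.pA_e, sub_self]
    · have hiN : i < n := by omega
      have hjN : j < n := by omega
      rw [S.L_eq_D_add_T i, S.L_eq_D_add_T j,
        comm_central ((IH i hiN).2.1 S.e) ((IH j hjN).2.1 (S.pA y)),
        S.pA_sub, S.pA_mul, S.pA_mul,
        (S.uAB hHDle i (by omega) hpos).1, zero_mul, mul_zero, sub_self]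

/-- (ii) `pB (L n e)` centralizes B. -/
lemma lieEB (hn : 1 ≤ n) (IH : ∀ k, k < n → S.Good k) (y : R) :
    S.pB (S.L n S.e) * S.pB y = S.pB y * S.pB (S.L n S.e) := by
  have hHDle : ∀ k, k ≤ n - 1 → S.HD k := fun k hk => (IH k (by omega)).1
  have hcomm : S.e * S.pB y - S.pB y * S.e = 0 := by rw [S.e_pB, S.pB_e, sub_self]
  have h := S.hLie n S.e (S.pB y)
  rw [hcomm, map_zero] at h
  have h2 : (0:R) = ∑ ij ∈ antidiagonal n,
      S.pB (S.L ij.1 S.e * S.L ij.2 (S.pB y) - S.L ij.2 (S.pB y) * S.L ij.1 S.e) := by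
    calc (0:R) = S.pB 0 := S.pB_zero.symm
    _ = _ := by rw [h, S.pB_sum]
  have hred := sum_ad_single_left (n := n)
    (fun ij => S.pB (S.L ij.1 S.e * S.L ij.2 (S.pB y) - S.L ij.2 (S.pB y) * S.L ij.1 S.e))
    (fun i j hij hj => ?_)
  · rw [hred] at h2
    dsimp only at h2
    have h00 : S.L 0 (S.pB y) = S.pB y := by rw [S.hL0]; rfl
    rw [h00, S.pB_sub, S.pB_mul, S.pB_mul, S.pB_pB] at h2
    exact sub_eq_zero.1 h2.symm
  · dsimp only
    rcases Nat.eq_zero_or_pos i with h0 | hpos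
    · subst h0
      have h00 : S.L 0 S.e = S.e := by rw [S.hL0]; rfl
      rw [h00, S.pB_sub, S.pB_mul, S.pB_mul, S.pB_e', zero_mul, mul_zero, sub_self]
    · have hiN : i < n := by omega
      have hjN : j < n := by omega
      rw [S.L_eq_D_add_T i, S.L_eq_D_add_T j,
        comm_central ((IH i hiN).2.1 S.e) ((IH j hjN).2.1 (S.pB y)),
        S.pB_sub, S.pB_mul, S.pB_mul,
        (S.uAB hHDle i (by omega) hpos).2, zero_mul, mul_zero, sub_self]

/-- expansion of `L n (pM y)` via the Lie property. -/
lemma lieEMexp (hn : 1 ≤ n) (y : R) :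
    S.L n (S.pM y) = ∑ ij ∈ antidiagonal n,
      (S.L ij.1 S.e * S.L ij.2 (S.pM y) - S.L ij.2 (S.pM y) * S.L ij.1 S.e) := by
  have hcomm : S.e * S.pM y - S.pM y * S.e = S.pM y := by rw [S.e_pM, S.pM_e, sub_zero]
  have h := S.hLie n S.e (S.pM y)
  rwa [hcomm] at h

/-- A part of `L n m` vanishes. -/
lemma lieEM_pA (hn : 1 ≤ n) (IH : ∀ k, k < n → S.Good k) (y : R) :
    S.pA (S.L n (S.pM y)) = 0 := by
  have hHDle : ∀ k, k ≤ n - 1 → S.HD k := fun k hk => (IH k (by omega)).1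
  rw [S.lieEMexp hn y, S.pA_sum]
  apply Finset.sum_eq_zero
  intro ij hij
  have hij' := Finset.HasAntidiagonal.mem_antidiagonal.1 hij
  rcases Nat.eq_zero_or_pos ij.1 with h0 | hpos
  · have h00 : S.L 0 S.e = S.e := by rw [S.hL0]; rfl
    rw [h0, h00, S.pA_sub, S.pA_mul, S.pA_mul, S.pA_e', S.e_pA, S.pA_e, sub_self]
  · rcases Nat.eq_zero_or_pos ij.2 with h0' | hpos'
    · have h00 : S.L 0 (S.pM y) = S.pM y := by rw [S.hL0]; rfl
      rw [h0', h00, S.pA_sub, S.pA_mul, S.pA_mul, S.pA_pM, mul_zero, zero_mul, sub_self]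
    · have hiN : ij.1 < n := by omega
      have hjN : ij.2 < n := by omega
      rw [S.L_eq_D_add_T ij.1, S.L_eq_D_add_T ij.2,
        comm_central ((IH ij.1 hiN).2.1 S.e) ((IH ij.2 hjN).2.1 (S.pM y)),
        S.pA_sub, S.pA_mul, S.pA_mul,
        (S.uAB hHDle ij.1 (by omega) hpos).1, zero_mul, mul_zero, sub_self]

/-- B part of `L n m` vanishes. -/
lemma lieEM_pB (hn : 1 ≤ n) (IH : ∀ k, k < n → S.Good k) (y : R) :
    S.pB (S.L n (S.pM y)) = 0 := by
  have hHDle : ∀ k, k ≤ n - 1 → S.HD k := fun k hk => (IH k (by omega)).1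
  rw [S.lieEMexp hn y, S.pB_sum]
  apply Finset.sum_eq_zero
  intro ij hij
  have hij' := Finset.HasAntidiagonal.mem_antidiagonal.1 hij
  rcases Nat.eq_zero_or_pos ij.1 with h0 | hpos
  · have h00 : S.L 0 S.e = S.e := by rw [S.hL0]; rfl
    rw [h0, h00, S.pB_sub, S.pB_mul, S.pB_mul, S.pB_e', zero_mul, mul_zero, sub_self]
  · rcases Nat.eq_zero_or_pos ij.2 with h0' | hpos'
    · have h00 : S.L 0 (S.pM y) = S.pM y := by rw [S.hL0]; rfl
      rw [h0', h00, S.pB_sub, S.pB_mul, S.pB_mul, S.pB_pM, mul_zero, zero_mul, sub_self]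
    · have hiN : ij.1 < n := by omega
      have hjN : ij.2 < n := by omega
      rw [S.L_eq_D_add_T ij.1, S.L_eq_D_add_T ij.2,
        comm_central ((IH ij.1 hiN).2.1 S.e) ((IH ij.2 hjN).2.1 (S.pM y)),
        S.pB_sub, S.pB_mul, S.pB_mul,
        (S.uAB hHDle ij.1 (by omega) hpos).2, zero_mul, mul_zero, sub_self]

/-- (iii) intertwining relation on M. -/
lemma lieEM_pM (hn : 1 ≤ n) (IH : ∀ k, k < n → S.Good k) (y : R) :
    S.pA (S.L n S.e) * S.pM y = S.pM y * S.pB (S.L n S.e) := by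
  have hHDle : ∀ k, k ≤ n - 1 → S.HD k := fun k hk => (IH k (by omega)).1
  have hTaddle : ∀ k, k ≤ n - 1 → ∀ x y : R, S.T k (x+y) = S.T k x + S.T k y :=
    fun k hk => (IH k (by omega)).2.2.1
  have h2 : S.pM (S.L n (S.pM y)) = ∑ ij ∈ antidiagonal n,
      S.pM (S.L ij.1 S.e * S.L ij.2 (S.pM y) - S.L ij.2 (S.pM y) * S.L ij.1 S.e) := by
    rw [← S.pM_sum, ← S.lieEMexp hn y]
  have hred := sum_ad_boundary (n := n) hn
    (fun ij => S.pM (S.L ij.1 S.e * S.L ij.2 (S.pM y) - S.L ij.2 (S.pM y) * S.L ij.1 S.e))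
    (fun i j hij hi hj => ?_)
  · rw [hred] at h2
    dsimp only at h2
    have h00 : S.L 0 S.e = S.e := by rw [S.hL0]; rfl
    have h01 : S.L 0 (S.pM y) = S.pM y := by rw [S.hL0]; rfl
    rw [h00, h01] at h2
    simp only [S.pM_sub, S.pM_mul, S.pA_e', S.pM_e', S.pA_pM, S.pM_pM, S.pB_pM, S.pB_e',
      S.e_pM, zero_mul, mul_zero, add_zero, zero_add, sub_zero, zero_sub] at h2
    -- h2 : pM (L n m) = pM (L n m) + (wA * m - m * wB)
    nth_rewrite 1 [← add_zero (S.pM (S.L n (S.pM y)))] at h2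
    have h3 := (add_left_cancel h2).symm
    exact sub_eq_zero.1 h3
  · dsimp only
    have hiN : i < n := by omega
    have hjN : j < n := by omega
    rw [S.L_eq_D_add_T i, S.L_eq_D_add_T j,
      comm_central ((IH i hiN).2.1 S.e) ((IH j hjN).2.1 (S.pM y))]
    simp only [S.pM_sub, S.pM_mul, (S.uAB hHDle i (by omega) hi).1,
      (S.uAB hHDle i (by omega) hi).2,
      S.MpresA hHDle hTaddle j (by omega) y, S.MpresB hHDle j (by omega) y,
      zero_mul, mul_zero, add_zero, zero_add, sub_self]

/-- N part of `L n m` vanishes (2-torsion-freeness). -/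
lemma lieEM_pN (hn : 1 ≤ n) (IH : ∀ k, k < n → S.Good k) (y : R) :
    S.pN (S.L n (S.pM y)) = 0 := by
  have hHDle : ∀ k, k ≤ n - 1 → S.HD k := fun k hk => (IH k (by omega)).1
  have hTaddle : ∀ k, k ≤ n - 1 → ∀ x y : R, S.T k (x+y) = S.T k x + S.T k y :=
    fun k hk => (IH k (by omega)).2.2.1
  have h2 : S.pN (S.L n (S.pM y)) = ∑ ij ∈ antidiagonal n,
      S.pN (S.L ij.1 S.e * S.L ij.2 (S.pM y) - S.L ij.2 (S.pM y) * S.L ij.1 S.e) := by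
    rw [← S.pN_sum, ← S.lieEMexp hn y]
  have hred := sum_ad_boundary (n := n) hn
    (fun ij => S.pN (S.L ij.1 S.e * S.L ij.2 (S.pM y) - S.L ij.2 (S.pM y) * S.L ij.1 S.e))
    (fun i j hij hi hj => ?_)
  · rw [hred] at h2
    dsimp only at h2
    have h00 : S.L 0 S.e = S.e := by rw [S.hL0]; rfl
    have h01 : S.L 0 (S.pM y) = S.pM y := by rw [S.hL0]; rfl
    rw [h00, h01] at h2
    simp only [S.pN_sub, S.pN_mul, S.pA_e', S.pN_e', S.pA_pM, S.pN_pM, S.pB_pM, S.pB_e',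
      S.pN_e, zero_mul, mul_zero, add_zero, zero_add, sub_zero, zero_sub, sub_self] at h2
    -- h2 : pN (L n m) = -pN (L n m) (+ 0)
    have h3 : S.pN (S.L n (S.pM y)) + S.pN (S.L n (S.pM y)) = 0 := by
      nth_rewrite 1 [h2]; abel
    exact S.htf _ h3
  · dsimp only
    have hiN : i < n := by omega
    have hjN : j < n := by omega
    rw [S.L_eq_D_add_T i, S.L_eq_D_add_T j,
      comm_central ((IH i hiN).2.1 S.e) ((IH j hjN).2.1 (S.pM y))]
    simp only [S.pN_sub, S.pN_mul, (S.uAB hHDle i (by omega) hi).1,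
      (S.uAB hHDle i (by omega) hi).2,
      S.MpresA hHDle hTaddle j (by omega) y, S.MpresB hHDle j (by omega) y,
      zero_mul, mul_zero, add_zero, zero_add, sub_self]

end Phase1b

section Phase1c
variable {n : ℕ} {K : ℕ}

lemma NpresA (hHD : ∀ k, k ≤ K → S.HD k) :
    ∀ k, k ≤ K → ∀ x, S.pA (S.D k (S.pN x)) = 0 := by
  intro k hk x
  have hHDs : ∀ k, k ≤ K → S.swap.HD k := fun k hk => (S.HD_swap).2 (hHD k hk)
  have := S.swap.MpresB hHDs k hk x
  rw [S.D_swap] at this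
  exact this

lemma NpresB (hHD : ∀ k, k ≤ K → S.HD k)
    (hTadd : ∀ k, k ≤ K → ∀ x y, S.T k (x+y) = S.T k x + S.T k y) :
    ∀ k, k ≤ K → ∀ x, S.pB (S.D k (S.pN x)) = 0 := by
  intro k hk x
  have hHDs : ∀ k, k ≤ K → S.swap.HD k := fun k hk => (S.HD_swap).2 (hHD k hk)
  have hTs : ∀ k, k ≤ K → ∀ x y : R, S.swap.T k (x+y) = S.swap.T k x + S.swap.T k y :=
    fun k hk x y => by rw [S.T_swap]; exact hTadd k hk x y
  have := S.swap.MpresA hHDs hTs k hk x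
  rw [S.D_swap] at this
  exact this

lemma NpresM (hHD : ∀ k, k ≤ K → S.HD k)
    (hTadd : ∀ k, k ≤ K → ∀ x y, S.T k (x+y) = S.T k x + S.T k y) :
    ∀ k, k ≤ K → ∀ x, S.pM (S.D k (S.pN x)) = 0 := by
  intro k hk x
  have hHDs : ∀ k, k ≤ K → S.swap.HD k := fun k hk => (S.HD_swap).2 (hHD k hk)
  have hTs : ∀ k, k ≤ K → ∀ x y : R, S.swap.T k (x+y) = S.swap.T k x + S.swap.T k y :=
    fun k hk x y => by rw [S.T_swap]; exact hTadd k hk x y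
  have := S.swap.MpresN hHDs hTs k hk x
  rw [S.D_swap] at this
  exact this

lemma BpresA (hHD : ∀ k, k ≤ K → S.HD k) :
    ∀ k, k ≤ K → ∀ x, S.pA (S.D k (S.pB x)) = 0 := by
  intro k hk x
  have hHDs : ∀ k, k ≤ K → S.swap.HD k := fun k hk => (S.HD_swap).2 (hHD k hk)
  have := S.swap.ApresB hHDs k hk x
  rw [S.D_swap] at this
  exact this

/-- (iv) intertwining relation on N. -/
lemma lieEN_pN (hn : 1 ≤ n) (IH : ∀ k, k < n → S.Good k) (y : R) :
    S.pB (S.L n S.e) * S.pN y = S.pN y * S.pA (S.L n S.e) := by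
  have hHDle : ∀ k, k ≤ n - 1 → S.HD k := fun k hk => (IH k (by omega)).1
  have hTaddle : ∀ k, k ≤ n - 1 → ∀ x y : R, S.T k (x+y) = S.T k x + S.T k y :=
    fun k hk => (IH k (by omega)).2.2.1
  have hcomm : S.e * S.pN y - S.pN y * S.e = -(S.pN y) := by rw [S.e_pN, S.pN_e, zero_sub]
  have h := S.hLie n S.e (S.pN y)
  rw [hcomm, map_neg] at h
  have h2 : -(S.pN (S.L n (S.pN y))) = ∑ ij ∈ antidiagonal n,
      S.pN (S.L ij.1 S.e * S.L ij.2 (S.pN y) - S.L ij.2 (S.pN y) * S.L ij.1 S.e) := by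
    rw [← S.pN_sum, ← h, S.pN_neg]
  have hred := sum_ad_boundary (n := n) hn
    (fun ij => S.pN (S.L ij.1 S.e * S.L ij.2 (S.pN y) - S.L ij.2 (S.pN y) * S.L ij.1 S.e))
    (fun i j hij hi hj => ?_)
  · rw [hred] at h2
    dsimp only at h2
    have h00 : S.L 0 S.e = S.e := by rw [S.hL0]; rfl
    have h01 : S.L 0 (S.pN y) = S.pN y := by rw [S.hL0]; rfl
    rw [h00, h01] at h2
    simp only [S.pN_sub, S.pN_mul, S.pA_e', S.pN_e', S.pA_pN, S.pN_pN, S.pB_pN, S.pB_e',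
      S.pN_e, zero_mul, mul_zero, add_zero, zero_add, sub_zero, zero_sub] at h2
    -- h2 : -pN Z = -pN Z + (pB w * n' - n' * pA w)
    nth_rewrite 1 [← add_zero (-(S.pN (S.L n (S.pN y))))] at h2
    have h3 := (add_left_cancel h2).symm
    exact sub_eq_zero.1 h3
  · dsimp only
    have hiN : i < n := by omega
    have hjN : j < n := by omega
    rw [S.L_eq_D_add_T i, S.L_eq_D_add_T j,
      comm_central ((IH i hiN).2.1 S.e) ((IH j hjN).2.1 (S.pN y))]
    simp only [S.pN_sub, S.pN_mul, (S.uAB hHDle i (by omega) hi).1,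
      (S.uAB hHDle i (by omega) hi).2,
      S.NpresA hHDle j (by omega) y, S.NpresB hHDle hTaddle j (by omega) y,
      zero_mul, mul_zero, add_zero, zero_add, sub_self]

end Phase1c

end Setup

/-- All facts available after "phase 1" at level `n`. -/
structure Pre (S : Setup 𝕜 R) (n : ℕ) : Prop where
  hn : 1 ≤ n
  good : ∀ k, k < n → S.Good k
  tcent : ∀ k, k ≤ n → ∀ x, S.T k x ∈ Set.center R
  tadd : ∀ k, k ≤ n → ∀ x y, S.T k (x+y) = S.T k x + S.T k y
  tsmul : ∀ k, k ≤ n → ∀ (c : 𝕜) (x), S.T k (c • x) = c • S.T k x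
  tcomm : ∀ k, k ≤ n → ∀ x y, S.T k (x*y - y*x) = 0
  tM : ∀ k, k ≤ n → ∀ x, S.T k (S.pM x) = 0
  tN : ∀ k, k ≤ n → ∀ x, S.T k (S.pN x) = 0
  dAB : ∀ k, k ≤ n → ∀ x, S.pB (S.D k (S.pA x)) = 0
  dBA : ∀ k, k ≤ n → ∀ x, S.pA (S.D k (S.pB x)) = 0
  dMA : ∀ k, k ≤ n → ∀ x, S.pA (S.D k (S.pM x)) = 0
  dMB : ∀ k, k ≤ n → ∀ x, S.pB (S.D k (S.pM x)) = 0
  dMN : ∀ k, k ≤ n → ∀ x, S.pN (S.D k (S.pM x)) = 0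
  dNA : ∀ k, k ≤ n → ∀ x, S.pA (S.D k (S.pN x)) = 0
  dNB : ∀ k, k ≤ n → ∀ x, S.pB (S.D k (S.pN x)) = 0
  dNM : ∀ k, k ≤ n → ∀ x, S.pM (S.D k (S.pN x)) = 0
  d1 : ∀ k, 1 ≤ k → k ≤ n → S.D k (1:R) = 0
  deA : ∀ k, 1 ≤ k → k ≤ n → S.pA (S.D k S.e) = 0
  deB : ∀ k, 1 ≤ k → k ≤ n → S.pB (S.D k S.e) = 0
  dfA : ∀ k, 1 ≤ k → k ≤ n → S.pA (S.D k S.f) = 0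
  dfB : ∀ k, 1 ≤ k → k ≤ n → S.pB (S.D k S.f) = 0
  hdlt : ∀ k, k < n → S.HD k

lemma Pre.swap {S : Setup 𝕜 R} {n : ℕ} (P : Pre S n) : Pre S.swap n := by
  refine ⟨P.hn, fun k hk => S.Good_swap.mpr (P.good k hk), ?_, ?_, ?_, ?_, ?_, ?_, ?_, ?_,
    ?_, ?_, ?_, ?_, ?_, ?_, ?_, ?_, ?_, ?_, ?_, ?_⟩
  · intro k hk x; rw [S.T_swap]; exact P.tcent k hk x
  · intro k hk x y; rw [S.T_swap]; exact P.tadd k hk x y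
  · intro k hk c x; rw [S.T_swap]; exact P.tsmul k hk c x
  · intro k hk x y; rw [S.T_swap]; exact P.tcomm k hk x y
  · intro k hk x; rw [S.T_swap]; exact P.tN k hk x
  · intro k hk x; rw [S.T_swap]; exact P.tM k hk x
  · intro k hk x; rw [S.D_swap]; exact P.dBA k hk x
  · intro k hk x; rw [S.D_swap]; exact P.dAB k hk x
  · intro k hk x; rw [S.D_swap]; exact P.dNB k hk x
  · intro k hk x; rw [S.D_swap]; exact P.dNA k hk x
  · intro k hk x; rw [S.D_swap]; exact P.dNM k hk x
  · intro k hk x; rw [S.D_swap]; exact P.dMB k hk x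
  · intro k hk x; rw [S.D_swap]; exact P.dMA k hk x
  · intro k hk x; rw [S.D_swap]; exact P.dMN k hk x
  · intro k h1 hk; rw [S.D_swap]; exact P.d1 k h1 hk
  · intro k h1 hk; rw [S.D_swap]; exact P.dfB k h1 hk
  · intro k h1 hk; rw [S.D_swap]; exact P.dfA k h1 hk
  · intro k h1 hk; rw [S.D_swap]; exact P.deB k h1 hk
  · intro k h1 hk; rw [S.D_swap]; exact P.deA k h1 hk
  · intro k hk; exact (S.HD_swap).2 (P.hdlt k hk)

namespace Setup
variable (S : Setup 𝕜 R)

lemma mkPre {n : ℕ} (hn : 1 ≤ n) (IH : ∀ k, k < n → S.Good k) : Pre S n := by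
  have IH' : ∀ k, k < n → S.swap.Good k := fun k hk => S.Good_swap.mpr (IH k hk)
  have hHDle : ∀ k, k ≤ n - 1 → S.HD k := fun k hk => (IH k (by omega)).1
  have hTaddle : ∀ k, k ≤ n - 1 → ∀ x y : R, S.T k (x+y) = S.T k x + S.T k y :=
    fun k hk => (IH k (by omega)).2.2.1
  have ex1 : ∀ x : R, ∃ z, z ∈ Set.center R ∧ z * S.f = S.f * (S.L n (S.pA x)) * S.f :=
    S.exStep hn IH
  have ex2 : ∀ x : R, ∃ z, z ∈ Set.center R ∧
      z * S.swap.f = S.swap.f * (S.L n (S.swap.pA x)) * S.swap.f :=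
    S.swap.exStep hn IH'
  have spec1 : ∀ x : R, S.pick n (S.pA x) ∈ Set.center R ∧
      S.pick n (S.pA x) * S.f = S.pB (S.L n (S.pA x)) := fun x => S.pick_mem (ex1 x)
  have spec2 : ∀ x : R, S.swap.pick n (S.pB x) ∈ Set.center R ∧
      S.swap.pick n (S.pB x) * S.e = S.pA (S.L n (S.pB x)) := fun x => S.swap.pick_mem (ex2 x)
  have tauU : ∀ x, S.T n x = S.pick n (S.pA x) + S.swap.pick n (S.pB x) := by
    intro x; rw [T, if_neg (by omega : ¬ n = 0)]; rfl
  have tcentn : ∀ x, S.T n x ∈ Set.center R := fun x => by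
    rw [tauU]; exact Set.add_mem_center (spec1 x).1 (spec2 x).1
  have pickadd : ∀ x y : R, S.pick n (S.pA (x+y)) = S.pick n (S.pA x) + S.pick n (S.pA y) := by
    intro x y
    apply S.pick_eq (Set.add_mem_center (spec1 x).1 (spec1 y).1)
    rw [add_mul, (spec1 x).2, (spec1 y).2, S.pA_add, map_add, S.pB_add]
  have pickadd2 : ∀ x y : R,
      S.swap.pick n (S.pB (x+y)) = S.swap.pick n (S.pB x) + S.swap.pick n (S.pB y) := by
    intro x y
    apply S.swap.pick_eq (Set.add_mem_center (spec2 x).1 (spec2 y).1)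
    show _ * S.e = S.pA (S.L n (S.pB (x+y)))
    rw [add_mul, (spec2 x).2, (spec2 y).2, S.pB_add, map_add, S.pA_add]
  have taddn : ∀ x y, S.T n (x+y) = S.T n x + S.T n y := fun x y => by
    rw [tauU, tauU, tauU, pickadd, pickadd2]; abel
  have smulC : ∀ (c : 𝕜) (z : R), z ∈ Set.center R → c • z ∈ Set.center R := by
    intro c z hz
    rw [Semigroup.mem_center_iff]
    intro g
    rw [mul_smul_comm, smul_mul_assoc, cent hz g]
  have tsmuln : ∀ (c : 𝕜) (x : R), S.T n (c • x) = c • S.T n x := by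
    intro c x
    have p1 : S.pick n (S.pA (c • x)) = c • S.pick n (S.pA x) := by
      apply S.pick_eq (smulC c _ (spec1 x).1)
      rw [smul_mul_assoc, (spec1 x).2, S.pA_smul, map_smul, S.pB_smul]
    have p2 : S.swap.pick n (S.pB (c • x)) = c • S.swap.pick n (S.pB x) := by
      apply S.swap.pick_eq (smulC c _ (spec2 x).1)
      show _ * S.e = S.pA (S.L n (S.pB (c • x)))
      rw [smul_mul_assoc, (spec2 x).2, S.pB_smul, map_smul, S.pA_smul]
    rw [tauU, tauU, p1, p2, smul_add]
  have tcommn : ∀ x y, S.T n (x*y - y*x) = 0 := by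
    intro x y
    have p1 : S.pick n (S.pA (x*y - y*x)) = 0 := by
      apply S.pick_eq Set.zero_mem_center
      rw [zero_mul, S.pA_sub, S.pA_mul, S.pA_mul]
      exact (S.commB hn IH x y).symm
    have p2 : S.swap.pick n (S.pB (x*y - y*x)) = 0 := by
      apply S.swap.pick_eq Set.zero_mem_center
      show (0:R) * S.e = S.pA (S.L n (S.pB (x*y - y*x)))
      rw [zero_mul, S.pB_sub, S.pB_mul, S.pB_mul]
      exact (S.swap.commB hn IH' x y).symm
    rw [tauU, p1, p2, add_zero]
  have tMn : ∀ x, S.T n (S.pM x) = 0 := by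
    intro x
    rw [tauU, S.pA_pM, S.pB_pM, S.pick_zero, S.swap.pick_zero, add_zero]
  have tNn : ∀ x, S.T n (S.pN x) = 0 := by
    intro x
    rw [tauU, S.pA_pN, S.pB_pN, S.pick_zero, S.swap.pick_zero, add_zero]
  have dABn : ∀ x, S.pB (S.D n (S.pA x)) = 0 := by
    intro x
    show S.pB (S.L n (S.pA x) - S.T n (S.pA x)) = 0
    have hT : S.T n (S.pA x) = S.pick n (S.pA x) := by
      rw [tauU, S.pA_pA, S.pB_pA, S.swap.pick_zero, add_zero]
    rw [S.pB_sub, hT, S.pB_central (spec1 x).1, (spec1 x).2, sub_self]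
  have dBAn : ∀ x, S.pA (S.D n (S.pB x)) = 0 := by
    intro x
    show S.pA (S.L n (S.pB x) - S.T n (S.pB x)) = 0
    have hT : S.T n (S.pB x) = S.swap.pick n (S.pB x) := by
      rw [tauU, S.pA_pB, S.pick_zero, S.pB_pB, zero_add]
    rw [S.pA_sub, hT, S.pA_central (spec2 x).1, (spec2 x).2, sub_self]
  -- the w block
  have hzw : S.pA (S.L n S.e) + S.pB (S.L n S.e) ∈ Set.center R := by
    rw [Semigroup.mem_center_iff]
    intro g
    rw [S.decomp g]
    simp only [add_mul, mul_add, S.zAB, S.zMA, S.zNB, S.zBA, S.zAN, S.zBM,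
      add_zero, zero_add]
    rw [S.lieEA hn IH g, S.lieEB hn IH g, S.lieEM_pM hn IH g, S.lieEN_pN hn IH g]
    abel
  have picke : S.pick n S.e = S.pA (S.L n S.e) + S.pB (S.L n S.e) := by
    apply S.pick_eq hzw
    rw [add_mul, S.pA_f, S.pB_f, zero_add]
  have Tne : S.T n S.e = S.pA (S.L n S.e) + S.pB (S.L n S.e) := by
    rw [tauU, S.pA_e', S.pB_e', S.swap.pick_zero, add_zero, picke]
  have dneA : S.pA (S.D n S.e) = 0 := by
    show S.pA (S.L n S.e - S.T n S.e) = 0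
    rw [S.pA_sub, Tne, S.pA_add, S.pA_pA, S.pA_pB, add_zero, sub_self]
  have dneB : S.pB (S.D n S.e) = 0 := by
    show S.pB (S.L n S.e - S.T n S.e) = 0
    rw [S.pB_sub, Tne, S.pB_add, S.pB_pA, S.pB_pB, zero_add, sub_self]
  have Lone : S.L n (1:R) ∈ Set.center R := by
    rw [Semigroup.mem_center_iff]
    intro g
    have hcomm : (1:R) * g - g * 1 = 0 := by rw [one_mul, mul_one, sub_self]
    have h := S.hLie n 1 g
    rw [hcomm, map_zero] at h
    have hred := sum_ad_single_left (n := n)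
      (fun ij => S.L ij.1 (1:R) * S.L ij.2 g - S.L ij.2 g * S.L ij.1 (1:R))
      (fun i j hij hj => ?_)
    · rw [hred] at h
      dsimp only at h
      have h00 : S.L 0 g = g := by rw [S.hL0]; rfl
      rw [h00] at h
      exact (sub_eq_zero.1 h.symm).symm
    · dsimp only
      have hcent : S.L i (1:R) ∈ Set.center R := by
        rcases Nat.eq_zero_or_pos i with h0 | hpos
        · subst h0
          have h01 : S.L 0 (1:R) = 1 := by rw [S.hL0]; rfl
          rw [h01]; exact Set.one_mem_center
        · have hiN : i < n := by omega
          rw [S.L_eq_D_add_T i, S.Done hHDle i (by omega) hpos, zero_add]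
          exact (IH i hiN).2.1 1
      rw [cent hcent (S.L j g), sub_self]
  have subC : ∀ {u v : R}, u ∈ Set.center R → v ∈ Set.center R → u - v ∈ Set.center R := by
    intro u v hu hv; rw [sub_eq_add_neg]; exact Set.add_mem_center hu (Set.neg_mem_center hv)
  have c2f : S.swap.pick n (S.pB (1:R)) =
      S.L n 1 - (S.pA (S.L n S.e) + S.pB (S.L n S.e)) := by
    apply S.swap.pick_eq (subC Lone hzw)
    show _ * S.e = S.pA (S.L n (S.pB (1:R)))
    rw [S.pB_one]
    have hf : S.f = 1 - S.e := by rw [← S.hef1]; abel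
    rw [hf, map_sub, S.pA_sub, sub_mul, add_mul, S.pA_e, S.pB_e, add_zero,
      ← S.pA_central Lone]
  have Done_n : S.D n (1:R) = 0 := by
    show S.L n 1 - S.T n 1 = 0
    rw [tauU, S.pA_one, picke, c2f]
    abel
  have taddsub : ∀ x y, S.D n (x - y) = S.D n x - S.D n y := S.D_sub taddn
  have dnfA : S.pA (S.D n S.f) = 0 := by
    have hf : S.f = 1 - S.e := by rw [← S.hef1]; abel
    have hDf : S.D n S.f = S.D n 1 - S.D n S.e := by rw [hf]; exact taddsub 1 S.e
    rw [hDf, Done_n, zero_sub, S.pA_neg, dneA, neg_zero]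
  have dnfB : S.pB (S.D n S.f) = 0 := by
    have hf : S.f = 1 - S.e := by rw [← S.hef1]; abel
    have hDf : S.D n S.f = S.D n 1 - S.D n S.e := by rw [hf]; exact taddsub 1 S.e
    rw [hDf, Done_n, zero_sub, S.pB_neg, dneB, neg_zero]
  -- M and N preservation at level n
  have dTM : ∀ x, S.D n (S.pM x) = S.L n (S.pM x) := by
    intro x; show S.L n (S.pM x) - S.T n (S.pM x) = _; rw [tMn, sub_zero]
  have dTN : ∀ x, S.D n (S.pN x) = S.L n (S.pN x) := by
    intro x; show S.L n (S.pN x) - S.T n (S.pN x) = _; rw [tNn, sub_zero]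
  have dMAn : ∀ x, S.pA (S.D n (S.pM x)) = 0 := fun x => by
    rw [dTM]; exact S.lieEM_pA hn IH x
  have dMBn : ∀ x, S.pB (S.D n (S.pM x)) = 0 := fun x => by
    rw [dTM]; exact S.lieEM_pB hn IH x
  have dMNn : ∀ x, S.pN (S.D n (S.pM x)) = 0 := fun x => by
    rw [dTM]; exact S.lieEM_pN hn IH x
  have dNAn : ∀ x, S.pA (S.D n (S.pN x)) = 0 := fun x => by
    rw [dTN]; exact S.swap.lieEM_pB hn IH' x
  have dNBn : ∀ x, S.pB (S.D n (S.pN x)) = 0 := fun x => by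
    rw [dTN]; exact S.swap.lieEM_pA hn IH' x
  have dNMn : ∀ x, S.pM (S.D n (S.pN x)) = 0 := fun x => by
    rw [dTN]; exact S.swap.lieEM_pN hn IH' x
  -- assemble
  refine ⟨hn, IH, ?_, ?_, ?_, ?_, ?_, ?_, ?_, ?_, ?_, ?_, ?_, ?_, ?_, ?_, ?_, ?_, ?_, ?_, ?_,
    fun k hk => (IH k hk).1⟩
  · intro k hk x
    rcases Nat.lt_or_ge k n with h | h
    · exact (IH k h).2.1 x
    · have : k = n := by omega
      subst this; exact tcentn x
  · intro k hk x y
    rcases Nat.lt_or_ge k n with h | h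
    · exact (IH k h).2.2.1 x y
    · have : k = n := by omega
      subst this; exact taddn x y
  · intro k hk c x
    rcases Nat.lt_or_ge k n with h | h
    · exact (IH k h).2.2.2.1 c x
    · have : k = n := by omega
      subst this; exact tsmuln c x
  · intro k hk x y
    rcases Nat.lt_or_ge k n with h | h
    · exact (IH k h).2.2.2.2 x y
    · have : k = n := by omega
      subst this; exact tcommn x y
  · intro k hk x
    rcases Nat.lt_or_ge k n with h | h
    · exact S.tMlt IH h x
    · have : k = n := by omega
      subst this; exact tMn x
  · intro k hk x
    rcases Nat.lt_or_ge k n with h | h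
    · exact S.tNlt IH h x
    · have : k = n := by omega
      subst this; exact tNn x
  · intro k hk x
    rcases Nat.lt_or_ge k n with h | h
    · exact S.ApresB hHDle k (by omega) x
    · have : k = n := by omega
      subst this; exact dABn x
  · intro k hk x
    rcases Nat.lt_or_ge k n with h | h
    · exact S.BpresA hHDle k (by omega) x
    · have : k = n := by omega
      subst this; exact dBAn x
  · intro k hk x
    rcases Nat.lt_or_ge k n with h | h
    · exact S.MpresA hHDle hTaddle k (by omega) x
    · have : k = n := by omega
      subst this; exact dMAn x
  · intro k hk x
    rcases Nat.lt_or_ge k n with h | h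
    · exact S.MpresB hHDle k (by omega) x
    · have : k = n := by omega
      subst this; exact dMBn x
  · intro k hk x
    rcases Nat.lt_or_ge k n with h | h
    · exact S.MpresN hHDle hTaddle k (by omega) x
    · have : k = n := by omega
      subst this; exact dMNn x
  · intro k hk x
    rcases Nat.lt_or_ge k n with h | h
    · exact S.NpresA hHDle k (by omega) x
    · have : k = n := by omega
      subst this; exact dNAn x
  · intro k hk x
    rcases Nat.lt_or_ge k n with h | h
    · exact S.NpresB hHDle hTaddle k (by omega) x
    · have : k = n := by omega
      subst this; exact dNBn x
  · intro k hk x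
    rcases Nat.lt_or_ge k n with h | h
    · exact S.NpresM hHDle hTaddle k (by omega) x
    · have : k = n := by omega
      subst this; exact dNMn x
  · intro k h1 hk
    rcases Nat.lt_or_ge k n with h | h
    · exact S.Done hHDle k (by omega) h1
    · have : k = n := by omega
      subst this; exact Done_n
  · intro k h1 hk
    rcases Nat.lt_or_ge k n with h | h
    · exact (S.uAB hHDle k (by omega) h1).1
    · have : k = n := by omega
      subst this; exact dneA
  · intro k h1 hk
    rcases Nat.lt_or_ge k n with h | h
    · exact (S.uAB hHDle k (by omega) h1).2
    · have : k = n := by omega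
      subst this; exact dneB
  · intro k h1 hk
    rcases Nat.lt_or_ge k n with h | h
    · exact (S.uABf hHDle hTaddle k (by omega) h1).1
    · have : k = n := by omega
      subst this; exact dnfA
  · intro k h1 hk
    rcases Nat.lt_or_ge k n with h | h
    · exact (S.uABf hHDle hTaddle k (by omega) h1).2
    · have : k = n := by omega
      subst this; exact dnfB

section Phase2a
variable {n : ℕ}

lemma Dzero'' (P : Pre S n) {k : ℕ} (hk : k ≤ n) : S.D k (0:R) = 0 := by
  have h := S.D_add (P.tadd k hk) 0 0
  rw [add_zero] at h
  nth_rewrite 1 [← add_zero (S.D k (0:R))] at h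
  exact (add_left_cancel h).symm

lemma eqMof {u : R} (h1 : S.pA u = 0) (h2 : S.pN u = 0) (h3 : S.pB u = 0) :
    S.pM u = u := by
  conv_rhs => rw [S.decomp u]
  rw [h1, h2, h3, zero_add, add_zero, add_zero]

lemma eqNof {u : R} (h1 : S.pA u = 0) (h2 : S.pM u = 0) (h3 : S.pB u = 0) :
    S.pN u = u := by
  conv_rhs => rw [S.decomp u]
  rw [h1, h2, h3, zero_add, zero_add, add_zero]

/-- `D` preserves M-form elements, with membership hypotheses. -/
lemma dMform (P : Pre S n) {k : ℕ} (hk : k ≤ n) {m : R} (hm : S.pM m = m) :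
    S.pM (S.D k m) = S.D k m := by
  have h1 : S.pA (S.D k m) = 0 := by rw [← hm]; exact P.dMA k hk m
  have h2 : S.pN (S.D k m) = 0 := by rw [← hm]; exact P.dMN k hk m
  have h3 : S.pB (S.D k m) = 0 := by rw [← hm]; exact P.dMB k hk m
  exact S.eqMof h1 h2 h3

lemma dNform (P : Pre S n) {k : ℕ} (hk : k ≤ n) {m : R} (hm : S.pN m = m) :
    S.pN (S.D k m) = S.D k m := by
  have h1 : S.pA (S.D k m) = 0 := by rw [← hm]; exact P.dNA k hk m
  have h2 : S.pM (S.D k m) = 0 := by rw [← hm]; exact P.dNM k hk m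
  have h3 : S.pB (S.D k m) = 0 := by rw [← hm]; exact P.dNB k hk m
  exact S.eqNof h1 h2 h3

lemma dABform (P : Pre S n) {k : ℕ} (hk : k ≤ n) {a : R} (ha : S.pA a = a) :
    S.pB (S.D k a) = 0 := by rw [← ha]; exact P.dAB k hk a

lemma dBAform (P : Pre S n) {k : ℕ} (hk : k ≤ n) {b : R} (hb : S.pB b = b) :
    S.pA (S.D k b) = 0 := by rw [← hb]; exact P.dBA k hk b

/-- reduction: `u * v = pA u * v` when `pB u = 0` and `v` is M-form. -/
lemma redA_M {u v : R} (h1 : S.pB u = 0) (h2 : S.pM v = v) : u * v = S.pA u * v := by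
  have h3 : S.pM u * v = 0 := by rw [← h2]; exact S.zMM u v
  have h4 : S.pN u * v = 0 := by rw [← h2]; exact S.zNM u v
  nth_rewrite 1 [S.decomp u]
  rw [h1, add_zero, add_mul, add_mul, h3, h4, add_zero, add_zero]

lemma redM_B {u v : R} (h1 : S.pM u = u) (h2 : S.pA v = 0) : u * v = u * S.pB v := by
  have h3 : u * S.pM v = 0 := by rw [← h1]; exact S.zMM u v
  have h4 : u * S.pN v = 0 := by rw [← h1]; exact S.zMN u v
  nth_rewrite 1 [S.decomp v]
  rw [h2, zero_add, mul_add, mul_add, h3, h4, zero_add, zero_add]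

lemma redN_A {u v : R} (h1 : S.pN u = u) (h2 : S.pB v = 0) : u * v = u * S.pA v := by
  have h3 : u * S.pM v = 0 := by rw [← h1]; exact S.zNM u v
  have h4 : u * S.pN v = 0 := by rw [← h1]; exact S.zNN u v
  nth_rewrite 1 [S.decomp v]
  rw [h2, add_zero, mul_add, mul_add, h3, h4, add_zero, add_zero]

lemma redB_N {u v : R} (h1 : S.pA u = 0) (h2 : S.pN v = v) : u * v = S.pB u * v := by
  have h3 : S.pM u * v = 0 := by rw [← h2]; exact S.zMN u v
  have h4 : S.pN u * v = 0 := by rw [← h2]; exact S.zNN u v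
  nth_rewrite 1 [S.decomp u]
  rw [h1, zero_add, add_mul, add_mul, h3, h4, zero_add, zero_add]

/-- the τ-corrected Lie property at level n. -/
lemma lieD (P : Pre S n) (x y : R) :
    S.D n (x*y - y*x) = ∑ ij ∈ antidiagonal n,
      (S.D ij.1 x * S.D ij.2 y - S.D ij.2 y * S.D ij.1 x) := by
  have h1 : S.D n (x*y - y*x) = S.L n (x*y - y*x) := by
    show S.L n _ - S.T n _ = _
    rw [P.tcomm n le_rfl x y, sub_zero]
  rw [h1, S.hLie n x y]
  apply Finset.sum_congr rfl
  intro ij hij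
  have hij' := Finset.HasAntidiagonal.mem_antidiagonal.1 hij
  rw [S.L_eq_D_add_T ij.1, S.L_eq_D_add_T ij.2,
    comm_central (P.tcent ij.1 (by omega) x) (P.tcent ij.2 (by omega) y)]

end Phase2a

section Phase2b
variable {n : ℕ}

lemma formMzero {p q : R} (hp : S.pM p = p) (hqB : S.pB q = 0) : p * q = 0 := by
  nth_rewrite 1 [← hp]
  rw [S.decomp q, hqB, add_zero, mul_add, mul_add]
  simp only [S.zMA, S.zMM, S.zMN, add_zero]

lemma formAN {p q : R} (hpB : S.pB p = 0) (hq : S.pN q = q) : p * q = 0 := by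
  nth_rewrite 1 [← hq]
  rw [S.decomp p, hpB, add_zero, add_mul, add_mul]
  simp only [S.zAN, S.zMN, S.zNN, add_zero]

lemma formNB {p q : R} (hp : S.pN p = p) (hqA : S.pA q = 0) : p * q = 0 := by
  nth_rewrite 1 [← hp]
  rw [S.decomp q, hqA, zero_add, mul_add, mul_add]
  simp only [S.zNM, S.zNN, S.zNB, add_zero, zero_add]

lemma formBM {p q : R} (hpA : S.pA p = 0) (hq : S.pM q = q) : p * q = 0 := by
  nth_rewrite 1 [← hq]
  rw [S.decomp p, hpA, zero_add, add_mul, add_mul]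
  simp only [S.zMM, S.zNM, S.zBM, add_zero, zero_add]

-- the "both sides vanish" cases
lemma caseMA (P : Pre S n) {u v : R} (hu : S.pM u = u) (hv : S.pA v = v) :
    S.D n (u*v) = ∑ ij ∈ antidiagonal n, S.D ij.1 u * S.D ij.2 v := by
  have h0 : u * v = 0 := S.formMzero hu (by rw [← hv]; exact S.pB_pA v)
  rw [h0, S.Dzero'' P le_rfl]
  symm; apply Finset.sum_eq_zero
  intro ij hij
  have hij' := Finset.HasAntidiagonal.mem_antidiagonal.1 hij
  exact S.formMzero (S.dMform P (by omega) hu) (S.dABform P (by omega) hv)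

lemma caseMM (P : Pre S n) {u v : R} (hu : S.pM u = u) (hv : S.pM v = v) :
    S.D n (u*v) = ∑ ij ∈ antidiagonal n, S.D ij.1 u * S.D ij.2 v := by
  have h0 : u * v = 0 := S.formMzero hu (by rw [← hv]; exact S.pB_pM v)
  rw [h0, S.Dzero'' P le_rfl]
  symm; apply Finset.sum_eq_zero
  intro ij hij
  have hij' := Finset.HasAntidiagonal.mem_antidiagonal.1 hij
  exact S.formMzero (S.dMform P (by omega) hu)
    (by rw [← S.dMform P (by omega : ij.2 ≤ n) hv]; exact S.pB_pM _)

lemma caseMN (P : Pre S n) {u v : R} (hu : S.pM u = u) (hv : S.pN v = v) :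
    S.D n (u*v) = ∑ ij ∈ antidiagonal n, S.D ij.1 u * S.D ij.2 v := by
  have h0 : u * v = 0 := S.formMzero hu (by rw [← hv]; exact S.pB_pN v)
  rw [h0, S.Dzero'' P le_rfl]
  symm; apply Finset.sum_eq_zero
  intro ij hij
  have hij' := Finset.HasAntidiagonal.mem_antidiagonal.1 hij
  exact S.formMzero (S.dMform P (by omega) hu)
    (by rw [← S.dNform P (by omega : ij.2 ≤ n) hv]; exact S.pB_pN _)

lemma caseAN (P : Pre S n) {u v : R} (hu : S.pA u = u) (hv : S.pN v = v) :
    S.D n (u*v) = ∑ ij ∈ antidiagonal n, S.D ij.1 u * S.D ij.2 v := by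
  have h0 : u * v = 0 := S.formAN (by rw [← hu]; exact S.pB_pA u) hv
  rw [h0, S.Dzero'' P le_rfl]
  symm; apply Finset.sum_eq_zero
  intro ij hij
  have hij' := Finset.HasAntidiagonal.mem_antidiagonal.1 hij
  exact S.formAN (S.dABform P (by omega) hu) (S.dNform P (by omega) hv)

lemma caseNM (P : Pre S n) {u v : R} (hu : S.pN u = u) (hv : S.pM v = v) :
    S.D n (u*v) = ∑ ij ∈ antidiagonal n, S.D ij.1 u * S.D ij.2 v := by
  have h0 : u * v = 0 := S.formNB hu (by rw [← hv]; exact S.pA_pM v)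
  rw [h0, S.Dzero'' P le_rfl]
  symm; apply Finset.sum_eq_zero
  intro ij hij
  have hij' := Finset.HasAntidiagonal.mem_antidiagonal.1 hij
  exact S.formNB (S.dNform P (by omega) hu)
    (by rw [← S.dMform P (by omega : ij.2 ≤ n) hv]; exact S.pA_pM _)

lemma caseNN (P : Pre S n) {u v : R} (hu : S.pN u = u) (hv : S.pN v = v) :
    S.D n (u*v) = ∑ ij ∈ antidiagonal n, S.D ij.1 u * S.D ij.2 v := by
  have h0 : u * v = 0 := S.formNB hu (by rw [← hv]; exact S.pA_pN v)
  rw [h0, S.Dzero'' P le_rfl]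
  symm; apply Finset.sum_eq_zero
  intro ij hij
  have hij' := Finset.HasAntidiagonal.mem_antidiagonal.1 hij
  exact S.formNB (S.dNform P (by omega) hu)
    (by rw [← S.dNform P (by omega : ij.2 ≤ n) hv]; exact S.pA_pN _)

lemma caseNB (P : Pre S n) {u v : R} (hu : S.pN u = u) (hv : S.pB v = v) :
    S.D n (u*v) = ∑ ij ∈ antidiagonal n, S.D ij.1 u * S.D ij.2 v := by
  have h0 : u * v = 0 := S.formNB hu (by rw [← hv]; exact S.pA_pB v)
  rw [h0, S.Dzero'' P le_rfl]
  symm; apply Finset.sum_eq_zero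
  intro ij hij
  have hij' := Finset.HasAntidiagonal.mem_antidiagonal.1 hij
  exact S.formNB (S.dNform P (by omega) hu) (S.dBAform P (by omega) hv)

lemma caseBM (P : Pre S n) {u v : R} (hu : S.pB u = u) (hv : S.pM v = v) :
    S.D n (u*v) = ∑ ij ∈ antidiagonal n, S.D ij.1 u * S.D ij.2 v := by
  have h0 : u * v = 0 := S.formBM (by rw [← hu]; exact S.pA_pB u) hv
  rw [h0, S.Dzero'' P le_rfl]
  symm; apply Finset.sum_eq_zero
  intro ij hij
  have hij' := Finset.HasAntidiagonal.mem_antidiagonal.1 hij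
  exact S.formBM (S.dBAform P (by omega) hu) (S.dMform P (by omega) hv)

-- commutator-driven cases
lemma caseAM (P : Pre S n) {u v : R} (hu : S.pA u = u) (hv : S.pM v = v) :
    S.D n (u*v) = ∑ ij ∈ antidiagonal n, S.D ij.1 u * S.D ij.2 v := by
  have h := S.lieD P u v
  have hvu : v * u = 0 := S.formMzero hv (by rw [← hu]; exact S.pB_pA u)
  rw [hvu, sub_zero, Finset.sum_sub_distrib] at h
  have hz : ∑ ij ∈ antidiagonal n, S.D ij.2 v * S.D ij.1 u = 0 := by
    apply Finset.sum_eq_zero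
    intro ij hij
    have hij' := Finset.HasAntidiagonal.mem_antidiagonal.1 hij
    exact S.formMzero (S.dMform P (by omega) hv) (S.dABform P (by omega) hu)
  rw [hz, sub_zero] at h
  exact h

lemma caseMB (P : Pre S n) {u v : R} (hu : S.pM u = u) (hv : S.pB v = v) :
    S.D n (u*v) = ∑ ij ∈ antidiagonal n, S.D ij.1 u * S.D ij.2 v := by
  have h := S.lieD P u v
  have hvu : v * u = 0 := S.formBM (by rw [← hv]; exact S.pA_pB v) hu
  rw [hvu, sub_zero, Finset.sum_sub_distrib] at h
  have hz : ∑ ij ∈ antidiagonal n, S.D ij.2 v * S.D ij.1 u = 0 := by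
    apply Finset.sum_eq_zero
    intro ij hij
    have hij' := Finset.HasAntidiagonal.mem_antidiagonal.1 hij
    exact S.formBM (S.dBAform P (by omega) hv) (S.dMform P (by omega) hu)
  rw [hz, sub_zero] at h
  exact h

lemma caseNA (P : Pre S n) {u v : R} (hu : S.pN u = u) (hv : S.pA v = v) :
    S.D n (u*v) = ∑ ij ∈ antidiagonal n, S.D ij.1 u * S.D ij.2 v := by
  have h := S.lieD P u v
  have hvu : v * u = 0 := S.formAN (by rw [← hv]; exact S.pB_pA v) hu
  rw [hvu, sub_zero, Finset.sum_sub_distrib] at h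
  have hz : ∑ ij ∈ antidiagonal n, S.D ij.2 v * S.D ij.1 u = 0 := by
    apply Finset.sum_eq_zero
    intro ij hij
    have hij' := Finset.HasAntidiagonal.mem_antidiagonal.1 hij
    exact S.formAN (S.dABform P (by omega) hv) (S.dNform P (by omega) hu)
  rw [hz, sub_zero] at h
  exact h

lemma caseBN (P : Pre S n) {u v : R} (hu : S.pB u = u) (hv : S.pN v = v) :
    S.D n (u*v) = ∑ ij ∈ antidiagonal n, S.D ij.1 u * S.D ij.2 v := by
  have h := S.lieD P u v
  have hvu : v * u = 0 := S.formNB hv (by rw [← hu]; exact S.pA_pB u)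
  rw [hvu, sub_zero, Finset.sum_sub_distrib] at h
  have hz : ∑ ij ∈ antidiagonal n, S.D ij.2 v * S.D ij.1 u = 0 := by
    apply Finset.sum_eq_zero
    intro ij hij
    have hij' := Finset.HasAntidiagonal.mem_antidiagonal.1 hij
    exact S.formNB (S.dNform P (by omega) hv) (S.dBAform P (by omega) hu)
  rw [hz, sub_zero] at h
  exact h

/-- The A-B case: both product sums vanish. -/
lemma caseABBA (P : Pre S n) {u v : R} (hu : S.pA u = u) (hv : S.pB v = v) :
    (∑ ij ∈ antidiagonal n, S.D ij.1 u * S.D ij.2 v) = 0 ∧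
    (∑ ij ∈ antidiagonal n, S.D ij.1 v * S.D ij.2 u) = 0 := by
  have huv : u * v = 0 := by rw [← hu, ← hv]; exact S.zAB u v
  have hvu : v * u = 0 := by rw [← hu, ← hv]; exact S.zBA v u
  have h := S.lieD P u v
  rw [huv, hvu, sub_self, S.Dzero'' P le_rfl, Finset.sum_sub_distrib] at h
  have hswap : ∑ ij ∈ antidiagonal n, S.D ij.2 v * S.D ij.1 u
      = ∑ ij ∈ antidiagonal n, S.D ij.1 v * S.D ij.2 u := by
    conv_rhs => rw [← Finset.HasAntidiagonal.map_swap_antidiagonal (n := n)]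
    rw [Finset.sum_map]
    rfl
  rw [hswap] at h
  have heq : (∑ ij ∈ antidiagonal n, S.D ij.1 u * S.D ij.2 v)
      = ∑ ij ∈ antidiagonal n, S.D ij.1 v * S.D ij.2 u := by
    have := h.symm
    rwa [sub_eq_zero] at this
  -- G(u,v) is M-pure
  have hGA : S.pA (∑ ij ∈ antidiagonal n, S.D ij.1 u * S.D ij.2 v) = 0 := by
    rw [S.pA_sum]
    apply Finset.sum_eq_zero
    intro ij hij
    have hij' := Finset.HasAntidiagonal.mem_antidiagonal.1 hij
    rw [S.pA_mul, S.dBAform P (by omega) hv, mul_zero]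
  have hGN : S.pN (∑ ij ∈ antidiagonal n, S.D ij.1 u * S.D ij.2 v) = 0 := by
    rw [S.pN_sum]
    apply Finset.sum_eq_zero
    intro ij hij
    have hij' := Finset.HasAntidiagonal.mem_antidiagonal.1 hij
    rw [S.pN_mul, S.dBAform P (by omega) hv, S.dABform P (by omega) hu,
      mul_zero, zero_mul, add_zero]
  have hGB : S.pB (∑ ij ∈ antidiagonal n, S.D ij.1 u * S.D ij.2 v) = 0 := by
    rw [S.pB_sum]
    apply Finset.sum_eq_zero
    intro ij hij
    have hij' := Finset.HasAntidiagonal.mem_antidiagonal.1 hij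
    rw [S.pB_mul, S.dABform P (by omega) hu, zero_mul]
  -- G(v,u) is N-pure
  have hG'M : S.pM (∑ ij ∈ antidiagonal n, S.D ij.1 v * S.D ij.2 u) = 0 := by
    rw [S.pM_sum]
    apply Finset.sum_eq_zero
    intro ij hij
    have hij' := Finset.HasAntidiagonal.mem_antidiagonal.1 hij
    rw [S.pM_mul, S.dBAform P (by omega) hv, S.dABform P (by omega) hu,
      zero_mul, mul_zero, add_zero]
  have hGM : S.pM (∑ ij ∈ antidiagonal n, S.D ij.1 u * S.D ij.2 v)
      = ∑ ij ∈ antidiagonal n, S.D ij.1 u * S.D ij.2 v :=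
    S.eqMof hGA hGN hGB
  have hG0 : (∑ ij ∈ antidiagonal n, S.D ij.1 u * S.D ij.2 v) = 0 := by
    rw [← hGM, heq, hG'M]
  exact ⟨hG0, by rw [← heq, hG0]⟩

end Phase2b

section Phase2c
variable {n : ℕ}

lemma redAM (P : Pre S n) {k : ℕ} (hk : k ≤ n) {u v : R}
    (hu : S.pA u = u) (hv : S.pM v = v) :
    S.D k (u * v) = ∑ ij ∈ antidiagonal k, S.pA (S.D ij.1 u) * S.D ij.2 v := by
  have hbase : S.D k (u*v) = ∑ ij ∈ antidiagonal k, S.D ij.1 u * S.D ij.2 v := by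
    rcases Nat.lt_or_ge k n with h | h
    · exact P.hdlt k h u v
    · have : k = n := by omega
      subst this; exact S.caseAM P hu hv
  rw [hbase]
  apply Finset.sum_congr rfl
  intro ij hij
  have hij' := Finset.HasAntidiagonal.mem_antidiagonal.1 hij
  exact S.redA_M (S.dABform P (by omega) hu) (S.dMform P (by omega) hv)

lemma redNA (P : Pre S n) {k : ℕ} (hk : k ≤ n) {u v : R}
    (hu : S.pN u = u) (hv : S.pA v = v) :
    S.D k (u * v) = ∑ ij ∈ antidiagonal k, S.D ij.1 u * S.pA (S.D ij.2 v) := by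
  have hbase : S.D k (u*v) = ∑ ij ∈ antidiagonal k, S.D ij.1 u * S.D ij.2 v := by
    rcases Nat.lt_or_ge k n with h | h
    · exact P.hdlt k h u v
    · have : k = n := by omega
      subst this; exact S.caseNA P hu hv
  rw [hbase]
  apply Finset.sum_congr rfl
  intro ij hij
  have hij' := Finset.HasAntidiagonal.mem_antidiagonal.1 hij
  exact S.redN_A (S.dNform P (by omega) hu) (S.dABform P (by omega) hv)

lemma GAB (P : Pre S n) {k : ℕ} (hk : k ≤ n) {u v : R}
    (hu : S.pA u = u) (hv : S.pB v = v) :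
    ∑ ij ∈ antidiagonal k, S.D ij.1 u * S.D ij.2 v = 0 := by
  rcases Nat.lt_or_ge k n with h | h
  · have h1 := P.hdlt k h u v
    have h0 : u * v = 0 := by rw [← hu, ← hv]; exact S.zAB u v
    rw [h0, S.Dzero'' P (by omega)] at h1
    exact h1.symm
  · have : k = n := by omega
    subst this; exact (S.caseABBA P hu hv).1

lemma GBA (P : Pre S n) {k : ℕ} (hk : k ≤ n) {u v : R}
    (hu : S.pA u = u) (hv : S.pB v = v) :
    ∑ ij ∈ antidiagonal k, S.D ij.1 v * S.D ij.2 u = 0 := by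
  rcases Nat.lt_or_ge k n with h | h
  · have h1 := P.hdlt k h v u
    have h0 : v * u = 0 := by rw [← hu, ← hv]; exact S.zBA v u
    rw [h0, S.Dzero'' P (by omega)] at h1
    exact h1.symm
  · have : k = n := by omega
    subst this; exact (S.caseABBA P hu hv).2

/-- The M-part formula: `pM (D k a) = -∑ pA (D i a) * pM (D j f)`. -/
lemma formulaM (P : Pre S n) {k : ℕ} (hk : k ≤ n) {u : R} (hu : S.pA u = u) :
    S.pM (S.D k u) + ∑ ij ∈ antidiagonal k, S.pA (S.D ij.1 u) * S.pM (S.D ij.2 S.f) = 0 := by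
  have h := S.GAB P hk hu S.pB_f'
  have h2 : (0:R) = ∑ ij ∈ antidiagonal k,
      (S.pA (S.D ij.1 u) * S.pM (S.D ij.2 S.f) + S.pM (S.D ij.1 u) * S.pB (S.D ij.2 S.f)) := by
    calc (0:R) = S.pM 0 := S.pM_zero.symm
    _ = S.pM (∑ ij ∈ antidiagonal k, S.D ij.1 u * S.D ij.2 S.f) := by rw [h]
    _ = _ := by
      rw [S.pM_sum]
      exact Finset.sum_congr rfl fun ij _ => S.pM_mul _ _
  rw [Finset.sum_add_distrib] at h2
  have h3 : ∑ ij ∈ antidiagonal k, S.pM (S.D ij.1 u) * S.pB (S.D ij.2 S.f)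
      = S.pM (S.D k u) := by
    have hred := sum_ad_single_left (n := k)
      (fun ij => S.pM (S.D ij.1 u) * S.pB (S.D ij.2 S.f))
      (fun i j hij hj => by
        dsimp only
        rw [P.dfB j hj (by omega), mul_zero])
    rw [hred]
    dsimp only
    rw [D_zero', S.pB_f', S.pM_f]
  rw [h3] at h2
  rw [add_comm]
  exact h2.symm

/-- The N-part formula: `pN (D k a) = -∑ pN (D i f) * pA (D j a)`. -/
lemma formulaN (P : Pre S n) {k : ℕ} (hk : k ≤ n) {u : R} (hu : S.pA u = u) :
    S.pN (S.D k u) + ∑ ij ∈ antidiagonal k, S.pN (S.D ij.1 S.f) * S.pA (S.D ij.2 u) = 0 := by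
  have h := S.GBA P hk hu S.pB_f'
  have h2 : (0:R) = ∑ ij ∈ antidiagonal k,
      (S.pN (S.D ij.1 S.f) * S.pA (S.D ij.2 u) + S.pB (S.D ij.1 S.f) * S.pN (S.D ij.2 u)) := by
    calc (0:R) = S.pN 0 := S.pN_zero.symm
    _ = S.pN (∑ ij ∈ antidiagonal k, S.D ij.1 S.f * S.D ij.2 u) := by rw [h]
    _ = _ := by
      rw [S.pN_sum]
      exact Finset.sum_congr rfl fun ij _ => S.pN_mul _ _
  rw [Finset.sum_add_distrib] at h2
  have h3 : ∑ ij ∈ antidiagonal k, S.pB (S.D ij.1 S.f) * S.pN (S.D ij.2 u)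
      = S.pN (S.D k u) := by
    have hred := sum_ad_single_right (n := k)
      (fun ij => S.pB (S.D ij.1 S.f) * S.pN (S.D ij.2 u))
      (fun i j hij hi => by
        dsimp only
        rw [P.dfB i hi (by omega), zero_mul])
    rw [hred]
    dsimp only
    rw [D_zero', S.pB_f', S.f_pN]
  rw [h3] at h2
  rw [add_comm]
  exact h2.symm

end Phase2c

section Phase2d
variable {n : ℕ}

lemma lawA (P : Pre S n) {u v : R} (hu : S.pA u = u) (hv : S.pA v = v) :
    S.pA (S.D n (u*v)) = ∑ ij ∈ antidiagonal n, S.pA (S.D ij.1 u) * S.pA (S.D ij.2 v) := by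
  have hw : S.pA (u*v) = u*v := by rw [S.pA_mul, hu, hv]
  have hAlow : ∀ k, k < n → S.pA (S.D k (u*v)) =
      ∑ ij ∈ antidiagonal k, S.pA (S.D ij.1 u) * S.pA (S.D ij.2 v) := by
    intro k hk
    rw [P.hdlt k hk u v, S.pA_sum]
    exact Finset.sum_congr rfl fun ij _ => S.pA_mul _ _
  have hleft : ∀ z : R,
      (S.pA (S.D n (u*v)) - ∑ ij ∈ antidiagonal n, S.pA (S.D ij.1 u) * S.pA (S.D ij.2 v))
        * S.pM z = 0 := by
    intro z
    have hMvz : S.pM (v * S.pM z) = v * S.pM z := by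
      have h1 : S.pM v = 0 := by rw [← hv, S.pM_pA]
      rw [S.pM_mul, S.pM_pM, hv, h1, zero_mul, add_zero]
    have h1 : S.D n ((u*v) * S.pM z)
        = ∑ ij ∈ antidiagonal n, S.pA (S.D ij.1 (u*v)) * S.D ij.2 (S.pM z) :=
      S.redAM P le_rfl hw (S.pM_pM z)
    have h2 : S.D n (u * (v * S.pM z))
        = ∑ ij ∈ antidiagonal n, S.pA (S.D ij.1 u) * S.D ij.2 (v * S.pM z) :=
      S.redAM P le_rfl hu hMvz
    have hc : ∑ ij ∈ antidiagonal n, S.pA (S.D ij.1 u) * S.D ij.2 (v * S.pM z)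
        = ∑ ij ∈ antidiagonal n, S.pA (S.D ij.1 u) *
            ∑ pq ∈ antidiagonal ij.2, S.pA (S.D pq.1 v) * S.D pq.2 (S.pM z) := by
      apply Finset.sum_congr rfl
      intro ij hij
      have hij' := Finset.HasAntidiagonal.mem_antidiagonal.1 hij
      rw [S.redAM P (by omega : ij.2 ≤ n) hv (S.pM_pM z)]
    have h4 : S.D n (u * (v * S.pM z))
        = ∑ ij ∈ antidiagonal n,
            (∑ pq ∈ antidiagonal ij.1, S.pA (S.D pq.1 u) * S.pA (S.D pq.2 v))
              * S.D ij.2 (S.pM z) := by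
      rw [h2, hc]
      exact conv_assoc (fun i => S.pA (S.D i u)) (fun p => S.pA (S.D p v))
        (fun q => S.D q (S.pM z)) n
    have hsub : (0:R) = ∑ ij ∈ antidiagonal n,
        (S.pA (S.D ij.1 (u*v)) -
          ∑ pq ∈ antidiagonal ij.1, S.pA (S.D pq.1 u) * S.pA (S.D pq.2 v))
          * S.D ij.2 (S.pM z) := by
      have hassoc : (u*v) * S.pM z = u * (v * S.pM z) := mul_assoc u v _
      calc (0:R) = S.D n ((u*v) * S.pM z) - S.D n (u * (v * S.pM z)) := by
            rw [hassoc, sub_self]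
      _ = _ := by
            rw [h1, h4, ← Finset.sum_sub_distrib]
            exact Finset.sum_congr rfl fun ij _ => (sub_mul _ _ _).symm
    have hred := sum_ad_single_left (n := n)
      (fun ij => (S.pA (S.D ij.1 (u*v)) -
          ∑ pq ∈ antidiagonal ij.1, S.pA (S.D pq.1 u) * S.pA (S.D pq.2 v))
          * S.D ij.2 (S.pM z))
      (fun i j hij hj => by
        dsimp only
        rw [hAlow i (by omega), sub_self, zero_mul])
    rw [hred] at hsub
    dsimp only at hsub
    rw [D_zero'] at hsub
    exact hsub.symm
  have hright : ∀ z : R,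
      S.pN z * (S.pA (S.D n (u*v)) -
        ∑ ij ∈ antidiagonal n, S.pA (S.D ij.1 u) * S.pA (S.D ij.2 v)) = 0 := by
    intro z
    have hNzu : S.pN (S.pN z * u) = S.pN z * u := by
      rw [S.pN_mul, S.pN_pN, hu, S.pB_pN, zero_mul, add_zero]
    have h1 : S.D n ((S.pN z * u) * v)
        = ∑ ij ∈ antidiagonal n, S.D ij.1 (S.pN z * u) * S.pA (S.D ij.2 v) :=
      S.redNA P le_rfl hNzu hv
    have h2 : S.D n (S.pN z * (u*v))
        = ∑ ij ∈ antidiagonal n, S.D ij.1 (S.pN z) * S.pA (S.D ij.2 (u*v)) :=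
      S.redNA P le_rfl (S.pN_pN z) hw
    have hc : ∑ ij ∈ antidiagonal n, S.D ij.1 (S.pN z * u) * S.pA (S.D ij.2 v)
        = ∑ ij ∈ antidiagonal n,
            (∑ pq ∈ antidiagonal ij.1, S.D pq.1 (S.pN z) * S.pA (S.D pq.2 u))
              * S.pA (S.D ij.2 v) := by
      apply Finset.sum_congr rfl
      intro ij hij
      have hij' := Finset.HasAntidiagonal.mem_antidiagonal.1 hij
      rw [S.redNA P (by omega : ij.1 ≤ n) (S.pN_pN z) hu]
    have h4 : S.D n ((S.pN z * u) * v)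
        = ∑ ij ∈ antidiagonal n, S.D ij.1 (S.pN z) *
            ∑ pq ∈ antidiagonal ij.2, S.pA (S.D pq.1 u) * S.pA (S.D pq.2 v) := by
      rw [h1, hc]
      exact (conv_assoc (fun i => S.D i (S.pN z)) (fun p => S.pA (S.D p u))
        (fun q => S.pA (S.D q v)) n).symm
    have hsub : (0:R) = ∑ ij ∈ antidiagonal n,
        S.D ij.1 (S.pN z) * (S.pA (S.D ij.2 (u*v)) -
          ∑ pq ∈ antidiagonal ij.2, S.pA (S.D pq.1 u) * S.pA (S.D pq.2 v)) := by
      have hassoc : S.pN z * (u*v) = (S.pN z * u) * v := (mul_assoc _ u v).symm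
      calc (0:R) = S.D n (S.pN z * (u*v)) - S.D n ((S.pN z * u) * v) := by
            rw [hassoc, sub_self]
      _ = _ := by
            rw [h2, h4, ← Finset.sum_sub_distrib]
            exact Finset.sum_congr rfl fun ij _ => (mul_sub _ _ _).symm
    have hred := sum_ad_single_right (n := n)
      (fun ij => S.D ij.1 (S.pN z) * (S.pA (S.D ij.2 (u*v)) -
          ∑ pq ∈ antidiagonal ij.2, S.pA (S.D pq.1 u) * S.pA (S.D pq.2 v)))
      (fun i j hij hi => by
        dsimp only
        rw [hAlow j (by omega), sub_self, mul_zero])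
    rw [hred] at hsub
    dsimp only at hsub
    rw [D_zero'] at hsub
    exact hsub.symm
  have hΦA : S.pA (S.pA (S.D n (u*v)) -
      ∑ ij ∈ antidiagonal n, S.pA (S.D ij.1 u) * S.pA (S.D ij.2 v))
      = S.pA (S.D n (u*v)) - ∑ ij ∈ antidiagonal n, S.pA (S.D ij.1 u) * S.pA (S.D ij.2 v) := by
    rw [S.pA_sub, S.pA_pA, S.pA_sum]
    have : ∀ ij ∈ antidiagonal n, S.pA (S.pA (S.D ij.1 u) * S.pA (S.D ij.2 v))
        = S.pA (S.D ij.1 u) * S.pA (S.D ij.2 v) := by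
      intro ij _
      rw [S.pA_mul, S.pA_pA, S.pA_pA]
    rw [Finset.sum_congr rfl this]
  have h0 := S.hwfA _ hΦA (fun m => hleft m) (fun m => hright m)
  exact sub_eq_zero.1 h0

lemma lawAfull (P : Pre S n) {u v : R} (hu : S.pA u = u) (hv : S.pA v = v) :
    ∀ k, k ≤ n → S.pA (S.D k (u*v)) =
      ∑ ij ∈ antidiagonal k, S.pA (S.D ij.1 u) * S.pA (S.D ij.2 v) := by
  intro k hk
  rcases Nat.lt_or_ge k n with h | h
  · rw [P.hdlt k h u v, S.pA_sum]
    exact Finset.sum_congr rfl fun ij _ => S.pA_mul _ _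
  · have : k = n := by omega
    subst this
    exact S.lawA P hu hv

lemma prodAA {p q : R} (hp : S.pB p = 0) (hq : S.pB q = 0) :
    p * q = S.pA p * S.pA q + S.pA p * S.pM q + S.pN p * S.pA q := by
  calc p * q = (S.pA p + S.pM p + S.pN p + S.pB p) * (S.pA q + S.pM q + S.pN q + S.pB q) := by
        rw [← S.decomp p, ← S.decomp q]
  _ = _ := by
        rw [hp, hq, add_zero, add_zero]
        simp only [add_mul, mul_add, S.zAN, S.zMA, S.zMM, S.zMN, S.zNM, S.zNN,
          add_zero, zero_add]
        abel

lemma caseAA (P : Pre S n) {u v : R} (hu : S.pA u = u) (hv : S.pA v = v) :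
    S.D n (u*v) = ∑ ij ∈ antidiagonal n, S.D ij.1 u * S.D ij.2 v := by
  have hw : S.pA (u*v) = u*v := by rw [S.pA_mul, hu, hv]
  -- M part
  have hM : S.pM (S.D n (u*v))
      = ∑ ij ∈ antidiagonal n, S.pA (S.D ij.1 u) * S.pM (S.D ij.2 v) := by
    have hF := S.formulaM P le_rfl hw
    have hc : ∑ ij ∈ antidiagonal n, S.pA (S.D ij.1 (u*v)) * S.pM (S.D ij.2 S.f)
        = ∑ ij ∈ antidiagonal n,
            (∑ pq ∈ antidiagonal ij.1, S.pA (S.D pq.1 u) * S.pA (S.D pq.2 v))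
              * S.pM (S.D ij.2 S.f) := by
      apply Finset.sum_congr rfl
      intro ij hij
      have hij' := Finset.HasAntidiagonal.mem_antidiagonal.1 hij
      rw [S.lawAfull P hu hv ij.1 (by omega)]
    have hassoc := (conv_assoc (fun i => S.pA (S.D i u)) (fun p => S.pA (S.D p v))
      (fun q => S.pM (S.D q S.f)) n).symm
    have hinner : ∑ ij ∈ antidiagonal n, S.pA (S.D ij.1 u) *
          ∑ pq ∈ antidiagonal ij.2, S.pA (S.D pq.1 v) * S.pM (S.D pq.2 S.f)
        = ∑ ij ∈ antidiagonal n, S.pA (S.D ij.1 u) * (-(S.pM (S.D ij.2 v))) := by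
      apply Finset.sum_congr rfl
      intro ij hij
      have hij' := Finset.HasAntidiagonal.mem_antidiagonal.1 hij
      have := S.formulaM P (by omega : ij.2 ≤ n) hv
      rw [eq_neg_of_add_eq_zero_right this]
    have key : ∑ ij ∈ antidiagonal n, S.pA (S.D ij.1 (u*v)) * S.pM (S.D ij.2 S.f)
        = -∑ ij ∈ antidiagonal n, S.pA (S.D ij.1 u) * S.pM (S.D ij.2 v) := by
      rw [hc, hassoc, hinner]
      rw [← Finset.sum_neg_distrib]
      exact Finset.sum_congr rfl fun ij _ => mul_neg _ _
    rw [key] at hF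
    linear_combination (norm := abel) hF
  -- N part
  have hN : S.pN (S.D n (u*v))
      = ∑ ij ∈ antidiagonal n, S.pN (S.D ij.1 u) * S.pA (S.D ij.2 v) := by
    have hF := S.formulaN P le_rfl hw
    have hc : ∑ ij ∈ antidiagonal n, S.pN (S.D ij.1 S.f) * S.pA (S.D ij.2 (u*v))
        = ∑ ij ∈ antidiagonal n, S.pN (S.D ij.1 S.f) *
            ∑ pq ∈ antidiagonal ij.2, S.pA (S.D pq.1 u) * S.pA (S.D pq.2 v) := by
      apply Finset.sum_congr rfl
      intro ij hij
      have hij' := Finset.HasAntidiagonal.mem_antidiagonal.1 hij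
      rw [S.lawAfull P hu hv ij.2 (by omega)]
    have hassoc := conv_assoc (fun i => S.pN (S.D i S.f)) (fun p => S.pA (S.D p u))
      (fun q => S.pA (S.D q v)) n
    have hinner : ∑ ij ∈ antidiagonal n,
          (∑ pq ∈ antidiagonal ij.1, S.pN (S.D pq.1 S.f) * S.pA (S.D pq.2 u))
            * S.pA (S.D ij.2 v)
        = ∑ ij ∈ antidiagonal n, (-(S.pN (S.D ij.1 u))) * S.pA (S.D ij.2 v) := by
      apply Finset.sum_congr rfl
      intro ij hij
      have hij' := Finset.HasAntidiagonal.mem_antidiagonal.1 hij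
      have := S.formulaN P (by omega : ij.1 ≤ n) hu
      rw [eq_neg_of_add_eq_zero_right this]
    have key : ∑ ij ∈ antidiagonal n, S.pN (S.D ij.1 S.f) * S.pA (S.D ij.2 (u*v))
        = -∑ ij ∈ antidiagonal n, S.pN (S.D ij.1 u) * S.pA (S.D ij.2 v) := by
      rw [hc, hassoc, hinner]
      rw [← Finset.sum_neg_distrib]
      exact Finset.sum_congr rfl fun ij _ => neg_mul _ _
    rw [key] at hF
    linear_combination (norm := abel) hF
  have hB : S.pB (S.D n (u*v)) = 0 := S.dABform P le_rfl hw
  have hRHS : ∑ ij ∈ antidiagonal n, S.D ij.1 u * S.D ij.2 v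
      = (∑ ij ∈ antidiagonal n, S.pA (S.D ij.1 u) * S.pA (S.D ij.2 v))
        + (∑ ij ∈ antidiagonal n, S.pA (S.D ij.1 u) * S.pM (S.D ij.2 v))
        + (∑ ij ∈ antidiagonal n, S.pN (S.D ij.1 u) * S.pA (S.D ij.2 v)) := by
    rw [← Finset.sum_add_distrib, ← Finset.sum_add_distrib]
    apply Finset.sum_congr rfl
    intro ij hij
    have hij' := Finset.HasAntidiagonal.mem_antidiagonal.1 hij
    exact S.prodAA (S.dABform P (by omega) hu) (S.dABform P (by omega) hv)
  calc S.D n (u*v) = S.pA (S.D n (u*v)) + S.pM (S.D n (u*v)) + S.pN (S.D n (u*v))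
        + S.pB (S.D n (u*v)) := S.decomp _
  _ = _ := by
      rw [S.lawA P hu hv, hM, hN, hB, add_zero, hRHS]

end Phase2d

section Phase2e
variable {n : ℕ}

lemma caseAB (P : Pre S n) {u v : R} (hu : S.pA u = u) (hv : S.pB v = v) :
    S.D n (u*v) = ∑ ij ∈ antidiagonal n, S.D ij.1 u * S.D ij.2 v := by
  have h0 : u*v = 0 := by rw [← hu, ← hv]; exact S.zAB u v
  rw [h0, S.Dzero'' P le_rfl, (S.caseABBA P hu hv).1]

lemma caseBA (P : Pre S n) {u v : R} (hu : S.pB u = u) (hv : S.pA v = v) :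
    S.D n (u*v) = ∑ ij ∈ antidiagonal n, S.D ij.1 u * S.D ij.2 v := by
  have h0 : u*v = 0 := by rw [← hu, ← hv]; exact S.zBA u v
  rw [h0, S.Dzero'' P le_rfl, (S.caseABBA P hv hu).2]

lemma caseBB (P : Pre S n) {u v : R} (hu : S.pB u = u) (hv : S.pB v = v) :
    S.D n (u*v) = ∑ ij ∈ antidiagonal n, S.D ij.1 u * S.D ij.2 v := by
  have h := S.swap.caseAA P.swap (u := u) (v := v) hu hv
  rw [S.D_swap] at h
  exact h

theorem stepGood (n : ℕ) (hn : 1 ≤ n) (IH : ∀ k, k < n → S.Good k) : S.Good n := by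
  have P := S.mkPre hn IH
  have hHDn : S.HD n := by
    intro x y
    have hDadd : ∀ a b : R, S.D n (a+b) = S.D n a + S.D n b := S.D_add (P.tadd n le_rfl)
    have hterm : ∀ ij ∈ antidiagonal n, S.D ij.1 x * S.D ij.2 y
        = (S.D ij.1 (S.pA x) + S.D ij.1 (S.pM x) + S.D ij.1 (S.pN x) + S.D ij.1 (S.pB x))
          * (S.D ij.2 (S.pA y) + S.D ij.2 (S.pM y) + S.D ij.2 (S.pN y) + S.D ij.2 (S.pB y)) := by
      intro ij hij
      have hij' := Finset.HasAntidiagonal.mem_antidiagonal.1 hij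
      have hDi : ∀ a b : R, S.D ij.1 (a+b) = S.D ij.1 a + S.D ij.1 b :=
        S.D_add (P.tadd ij.1 (by omega))
      have hDj : ∀ a b : R, S.D ij.2 (a+b) = S.D ij.2 a + S.D ij.2 b :=
        S.D_add (P.tadd ij.2 (by omega))
      nth_rewrite 1 [S.decomp x, S.decomp y]
      rw [hDi, hDi, hDi, hDj, hDj, hDj]
    have hRHS : ∑ ij ∈ antidiagonal n, S.D ij.1 x * S.D ij.2 y
        = ∑ ij ∈ antidiagonal n,
            ((S.D ij.1 (S.pA x) * S.D ij.2 (S.pA y) + S.D ij.1 (S.pA x) * S.D ij.2 (S.pM y)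
              + S.D ij.1 (S.pA x) * S.D ij.2 (S.pN y) + S.D ij.1 (S.pA x) * S.D ij.2 (S.pB y))
            + (S.D ij.1 (S.pM x) * S.D ij.2 (S.pA y) + S.D ij.1 (S.pM x) * S.D ij.2 (S.pM y)
              + S.D ij.1 (S.pM x) * S.D ij.2 (S.pN y) + S.D ij.1 (S.pM x) * S.D ij.2 (S.pB y))
            + (S.D ij.1 (S.pN x) * S.D ij.2 (S.pA y) + S.D ij.1 (S.pN x) * S.D ij.2 (S.pM y)
              + S.D ij.1 (S.pN x) * S.D ij.2 (S.pN y) + S.D ij.1 (S.pN x) * S.D ij.2 (S.pB y))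
            + (S.D ij.1 (S.pB x) * S.D ij.2 (S.pA y) + S.D ij.1 (S.pB x) * S.D ij.2 (S.pM y)
              + S.D ij.1 (S.pB x) * S.D ij.2 (S.pN y) + S.D ij.1 (S.pB x) * S.D ij.2 (S.pB y))) := by
      apply Finset.sum_congr rfl
      intro ij hij
      rw [hterm ij hij]
      simp only [add_mul, mul_add]
      abel
    have hLHS : S.D n (x*y)
        = S.D n (S.pA x * S.pA y) + S.D n (S.pA x * S.pM y)
          + S.D n (S.pA x * S.pN y) + S.D n (S.pA x * S.pB y)
          + (S.D n (S.pM x * S.pA y) + S.D n (S.pM x * S.pM y)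
          + S.D n (S.pM x * S.pN y) + S.D n (S.pM x * S.pB y))
          + (S.D n (S.pN x * S.pA y) + S.D n (S.pN x * S.pM y)
          + S.D n (S.pN x * S.pN y) + S.D n (S.pN x * S.pB y))
          + (S.D n (S.pB x * S.pA y) + S.D n (S.pB x * S.pM y)
          + S.D n (S.pB x * S.pN y) + S.D n (S.pB x * S.pB y)) := by
      have hxy : x * y
          = (S.pA x * S.pA y + S.pA x * S.pM y + S.pA x * S.pN y + S.pA x * S.pB y)
          + (S.pM x * S.pA y + S.pM x * S.pM y + S.pM x * S.pN y + S.pM x * S.pB y)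
          + (S.pN x * S.pA y + S.pN x * S.pM y + S.pN x * S.pN y + S.pN x * S.pB y)
          + (S.pB x * S.pA y + S.pB x * S.pM y + S.pB x * S.pN y + S.pB x * S.pB y) := by
        nth_rewrite 1 [S.decomp x, S.decomp y]
        simp only [add_mul, mul_add]
        abel
      rw [hxy]
      simp only [hDadd]
      try abel
    rw [hLHS, hRHS,
      S.caseAA P (S.pA_pA x) (S.pA_pA y), S.caseAM P (S.pA_pA x) (S.pM_pM y),
      S.caseAN P (S.pA_pA x) (S.pN_pN y), S.caseAB P (S.pA_pA x) (S.pB_pB y),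
      S.caseMA P (S.pM_pM x) (S.pA_pA y), S.caseMM P (S.pM_pM x) (S.pM_pM y),
      S.caseMN P (S.pM_pM x) (S.pN_pN y), S.caseMB P (S.pM_pM x) (S.pB_pB y),
      S.caseNA P (S.pN_pN x) (S.pA_pA y), S.caseNM P (S.pN_pN x) (S.pM_pM y),
      S.caseNN P (S.pN_pN x) (S.pN_pN y), S.caseNB P (S.pN_pN x) (S.pB_pB y),
      S.caseBA P (S.pB_pB x) (S.pA_pA y), S.caseBM P (S.pB_pB x) (S.pM_pM y),
      S.caseBN P (S.pB_pB x) (S.pN_pN y), S.caseBB P (S.pB_pB x) (S.pB_pB y)]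
    simp only [Finset.sum_add_distrib]
    try abel
  exact ⟨hHDn, P.tcent n le_rfl, P.tadd n le_rfl, P.tsmul n le_rfl, P.tcomm n le_rfl⟩

theorem allGood : ∀ n, S.Good n := by
  intro n
  induction n using Nat.strong_induction_on with
  | _ n ih =>
    rcases Nat.eq_zero_or_pos n with h | h
    · subst h; exact S.Good0
    · exact S.stepGood n h ih

end Phase2e

end Setup

end LHDzz

/-- Corollary `trivial`, Peirce form. A 2-torsion free, weakly faithful,
trivial (`MN = 0 = NM`) generalized matrix algebra `R` with `Z(eRe) = Z(R)e` and
`Z(fRf) = Z(R)f` has the LHD property. -/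
theorem trivial_LHD_property {𝕜 R : Type*} [CommRing 𝕜] [Ring R] [Algebra 𝕜 R]
    (htf : ∀ x : R, x + x = 0 → x = 0)
    (e : R) (he : e * e = e) (he0 : e ≠ 0) (he1 : e ≠ 1)
    (hMN : ∀ m ∈ corner e (1 - e), ∀ n ∈ corner (1 - e) e, m * n = 0)
    (hNM : ∀ n ∈ corner (1 - e) e, ∀ m ∈ corner e (1 - e), n * m = 0)
    (hwf : WeaklyFaithful e)
    (hZA : cornerCenter e = (fun z => z * e) '' Set.center R)
    (hZB : cornerCenter (1 - e) = (fun z => z * (1 - e)) '' Set.center R) :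
    HasLHDProperty 𝕜 R := by
  intro L hL
  have hff : (1-e) * (1-e) = (1-e) := by
    rw [sub_mul, one_mul, mul_sub, mul_one, he, sub_self, sub_zero]
  have hef : e * (1-e) = 0 := by rw [mul_sub, mul_one, he, sub_self]
  have hfe : (1-e) * e = 0 := by rw [sub_mul, one_mul, he, sub_self]
  let S : LHDzz.Setup 𝕜 R :=
  { L := L
    e := e
    f := 1 - e
    hL0 := hL.1
    hLie := hL.2
    htf := htf
    hee := he
    hff := hff
    hef := hef
    hfe := hfe
    hef1 := by abel
    hMN := fun x y => hMN _ ⟨x, rfl⟩ _ ⟨y, rfl⟩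
    hNM := fun x y => hNM _ ⟨x, rfl⟩ _ ⟨y, rfl⟩
    hwfA := fun a ha h1 h2 => hwf.1 a ⟨a, ha⟩
      (fun m hm => by obtain ⟨r, rfl⟩ := hm; exact h1 r)
      (fun m hm => by obtain ⟨r, rfl⟩ := hm; exact h2 r)
    hwfB := fun b hb h1 h2 => hwf.2 b ⟨b, hb⟩
      (fun m hm => by obtain ⟨r, rfl⟩ := hm; exact h2 r)
      (fun m hm => by obtain ⟨r, rfl⟩ := hm; exact h1 r)
    hZA := fun a ha hcomm => by
      have hmem : a ∈ cornerCenter e :=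
        ⟨⟨a, ha⟩, fun y hy => by obtain ⟨r, rfl⟩ := hy; exact hcomm r⟩
      rw [hZA] at hmem
      obtain ⟨z, hz, hze⟩ := hmem
      exact ⟨z, hz, hze⟩
    hZB := fun b hb hcomm => by
      have hmem : b ∈ cornerCenter (1-e) :=
        ⟨⟨b, hb⟩, fun y hy => by obtain ⟨r, rfl⟩ := hy; exact hcomm r⟩
      rw [hZB] at hmem
      obtain ⟨z, hz, hze⟩ := hmem
      exact ⟨z, hz, hze⟩ }
  classical
  let τ : ℕ → R →ₗ[𝕜] R := fun k =>
    { toFun := S.T k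
      map_add' := (S.allGood k).2.2.1
      map_smul' := (S.allGood k).2.2.2.1 }
  refine ⟨fun k => L k - τ k, τ, ⟨?_, ?_⟩, ?_, ?_, ?_⟩
  · ext x
    rw [LinearMap.sub_apply, hL.1]
    show LinearMap.id x - S.T 0 x = LinearMap.id x
    rw [S.T_zero', sub_zero]
  · intro k x y
    have h := (S.allGood k).1 x y
    exact h
  · intro k hk x
    exact (S.allGood k).2.1 x
  · intro k hk x y
    exact (S.allGood k).2.2.2.2 x y
  · intro k hk
    ext x
    rw [LinearMap.add_apply, LinearMap.sub_apply]
    show L k x = L k x - S.T k x + S.T k x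
    rw [sub_add_cancel]
end
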